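/- arXiv:2304.13715 — 6 statements merged into one kernel-verified Lean document; each statement's English description precedes it below -/
import Mathlib

section
/- Let Δ be a positive integer, let H be a bipartite graph with maximum degree Δ(H) ≤ Δ, let G be a graph and let X ⊊ V(G) be such that every vertex v ∈ V(G)∖X has degree at least |V(H)| − 1 in G. If |V(G)| ≤ (1 + 1/(4Δ(Δ+1)))·|V(H)| − 1 and |X| ≤ |V(H)|/((Δ+1)(Δ²+1)), then H is isomorphic to a subgraph of G. -/
open SimpleGraph

/-- The degree of a vertex: the number of neighbours. -/
noncomputable def deg {V : Type*} (G : SimpleGraph V) (v : V) : ℕ :=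
  (G.neighborSet v).ncard

/-- The minimum degree of a graph. -/
noncomputable def minDeg {V : Type*} (G : SimpleGraph V) : ℕ :=
  sInf (Set.range (deg G))

/-- The maximum degree of a graph. -/
noncomputable def maxDeg {V : Type*} (G : SimpleGraph V) : ℕ :=
  sSup (Set.range (deg G))

/-- The density of a graph: number of edges divided by number of vertices. -/
noncomputable def density {V : Type*} (G : SimpleGraph V) : ℝ :=
  (G.edgeSet.ncard : ℝ) / (Nat.card V : ℝ)

/-- The density of a subgraph of `G`. -/
noncomputable def subDensity {V : Type*} {G : SimpleGraph V} (J : G.Subgraph) : ℝ :=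
  (J.edgeSet.ncard : ℝ) / (J.verts.ncard : ℝ)

/-- A model (branch decomposition) of `H` in `G`: pairwise disjoint branch sets,
each inducing a connected (in particular nonempty) subgraph, with an edge of `G`
between the branch sets of any two adjacent vertices of `H`. -/
def IsModel {α β : Type*} (H : SimpleGraph α) (G : SimpleGraph β) (μ : α → Set β) : Prop :=
  (∀ u v : α, u ≠ v → Disjoint (μ u) (μ v)) ∧
  (∀ v : α, (G.induce (μ v)).Connected) ∧
  (∀ u v : α, H.Adj u v → ∃ a ∈ μ u, ∃ b ∈ μ v, G.Adj a b)

/-- `H` is a minor of `G`: there is a model of `H` in `G`. -/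
def IsMinor {α β : Type*} (H : SimpleGraph α) (G : SimpleGraph β) : Prop :=
  ∃ μ : α → Set β, IsModel H G μ

/-- `H` is isomorphic to a subgraph of `G`. -/
def IsSubgraphEmb {α β : Type*} (H : SimpleGraph α) (G : SimpleGraph β) : Prop :=
  ∃ f : α ↪ β, ∀ u v : α, H.Adj u v → G.Adj (f u) (f v)

/-- A (proper) separation of `G`. -/
def IsSeparation {V : Type*} (G : SimpleGraph V) (A B : Set V) : Prop :=
  A ∪ B = Set.univ ∧ ¬ A ⊆ B ∧ ¬ B ⊆ A ∧
    ∀ u ∈ A \ B, ∀ v ∈ B \ A, ¬ G.Adj u v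

/-- The pair `(G, X)` is `k`-dense: `X` is a proper subset of the vertices, and for
every separation of order at most `k` one of the two sides is contained in `X`. -/
def KDense {V : Type*} (G : SimpleGraph V) (X : Set V) (k : ℝ) : Prop :=
  X ≠ Set.univ ∧
  ∀ A B : Set V, IsSeparation G A B → ((A ∩ B).ncard : ℝ) ≤ k →
    A \ B ⊆ X ∨ B \ A ⊆ X

/-- The pair `(G, X)` is `(d, k)`-dense. -/
def DensePair {V : Type*} (G : SimpleGraph V) (X : Set V) (d k : ℝ) : Prop :=
  X ≠ Set.univ ∧
  (∀ v : V, v ∉ X → d ≤ (deg G v : ℝ)) ∧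
  ∀ A B : Set V, IsSeparation G A B → ((A ∩ B).ncard : ℝ) ≤ k →
    A \ B ⊆ X ∨ B \ A ⊆ X

/-- A graph family (of finite graphs, represented on the vertex sets `Fin n`) with
strongly sublinear separators: closed under subgraphs, and there are `c > 0` and
`0 < β < 1` such that every member has a balanced separation of order ≤ `c * n ^ β`. -/
def SSLS (F : ∀ n : ℕ, SimpleGraph (Fin n) → Prop) : Prop :=
  (∀ (n m : ℕ) (G : SimpleGraph (Fin n)) (H : SimpleGraph (Fin m)),
      F n G → IsSubgraphEmb H G → F m H) ∧
  ∃ c : ℝ, 0 < c ∧ ∃ β : ℝ, 0 < β ∧ β < 1 ∧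
    ∀ (n : ℕ) (G : SimpleGraph (Fin n)), F n G →
      ∃ A B : Set (Fin n), IsSeparation G A B ∧
        (A.ncard : ℝ) ≤ 2 / 3 * n ∧ (B.ncard : ℝ) ≤ 2 / 3 * n ∧
        ((A ∩ B).ncard : ℝ) ≤ c * (n : ℝ) ^ (β : ℝ)

/-- The extremal function `c(H)`: the supremum of densities of non-null graphs
with no `H` minor. -/
noncomputable def extremalFunction {α : Type*} (H : SimpleGraph α) : ℝ :=
  sSup {x : ℝ | ∃ (n : ℕ) (G : SimpleGraph (Fin n)), 0 < n ∧ ¬ IsMinor H G ∧ density G = x}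

/-- `G` is `H`-linked: `G` has at least as many vertices as `H` and every injection
`φ` of the vertices of `H` into those of `G` extends to a `φ`-rooted model of `H`. -/
def IsLinked {α β : Type*} (H : SimpleGraph α) (G : SimpleGraph β) : Prop :=
  Nat.card α ≤ Nat.card β ∧
  ∀ φ : α ↪ β, ∃ μ : α → Set β, IsModel H G μ ∧ ∀ v : α, φ v ∈ μ v

/-- `H'` is obtained from `H` by a simple edge extension: adding a new vertex joined
by an edge to at most one vertex of `H`, or two new vertices joined by an edge. -/
def IsSimpleEdgeExt {α β : Type*} (H : SimpleGraph α) (H' : SimpleGraph β) : Prop :=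
  ∃ f : α ↪ β,
    ((∃ x : β, x ∉ Set.range f ∧ (∀ y : β, y = x ∨ y ∈ Set.range f) ∧
       ((∀ u v : β, H'.Adj u v ↔ ∃ a b : α, u = f a ∧ v = f b ∧ H.Adj a b) ∨
        (∃ a : α, ∀ u v : β, H'.Adj u v ↔
          ((∃ a' b' : α, u = f a' ∧ v = f b' ∧ H.Adj a' b') ∨
           (u = x ∧ v = f a) ∨ (v = x ∧ u = f a))))) ∨
     (∃ x y : β, x ≠ y ∧ x ∉ Set.range f ∧ y ∉ Set.range f ∧
       (∀ z : β, z = x ∨ z = y ∨ z ∈ Set.range f) ∧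
       (∀ u v : β, H'.Adj u v ↔
         ((∃ a b : α, u = f a ∧ v = f b ∧ H.Adj a b) ∨
          (u = x ∧ v = y) ∨ (u = y ∧ v = x)))))

/-- `J` is a `k`-edge extension of `H`: obtained by a sequence of at most `k`
simple edge extensions (up to isomorphism). -/
def IsKEdgeExt {α β : Type*} (k : ℕ) (H : SimpleGraph α) (J : SimpleGraph β) : Prop :=
  ∃ j : ℕ, j ≤ k ∧ ∃ c : ℕ → (Σ n : ℕ, SimpleGraph (Fin n)),
    Nonempty (H ≃g (c 0).2) ∧ Nonempty (J ≃g (c j).2) ∧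
    ∀ i : ℕ, i < j → IsSimpleEdgeExt (c i).2 (c (i + 1)).2

/-- `G` is `(H + k)`-linked: `G` is `J`-linked for every `k`-edge extension `J` of `H`. -/
def IsPlusKLinked {α β : Type*} (H : SimpleGraph α) (k : ℕ) (G : SimpleGraph β) : Prop :=
  ∀ (m : ℕ) (J : SimpleGraph (Fin m)), IsKEdgeExt k H J → IsLinked J G

-- The connectivity of `G`: the minimum order of a separation, except for complete
-- graphs, where it is the number of vertices minus one.
open scoped Classical in
noncomputable def connectivity {V : Type*} (G : SimpleGraph V) : ℕ :=
  if ∀ u v : V, u ≠ v → G.Adj u v then Nat.card V - 1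
  else sInf {k : ℕ | ∃ A B : Set V, IsSeparation G A B ∧ (A ∩ B).ncard = k}

open Finset
lemma exists_bottom {β : Type*} [DecidableEq β] (f : β → ℕ) :
    ∀ (k : ℕ) (A : Finset β), k ≤ A.card →
      ∃ S, S ⊆ A ∧ S.card = k ∧ ∀ x ∈ S, ∀ y ∈ A \ S, f x ≤ f y := by
  intro k
  induction k with
  | zero => exact fun A _ => ⟨∅, empty_subset _, rfl, by simp⟩
  | succ k ih =>
    intro A hA
    have hne : A.Nonempty := Finset.card_pos.mp (by omega)
    obtain ⟨x₀, hx₀, hmin⟩ := Finset.exists_min_image A f hne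
    have hcard : k ≤ (A.erase x₀).card := by
      rw [Finset.card_erase_of_mem hx₀]; omega
    obtain ⟨S', hS'sub, hS'card, hS'min⟩ := ih (A.erase x₀) hcard
    have hx₀S' : x₀ ∉ S' := fun h => (Finset.mem_erase.mp (hS'sub h)).1 rfl
    refine ⟨insert x₀ S', ?_, ?_, ?_⟩
    · exact Finset.insert_subset hx₀ (hS'sub.trans (Finset.erase_subset _ _))
    · rw [Finset.card_insert_of_notMem hx₀S', hS'card]
    · intro x hx y hy
      rcases Finset.mem_insert.mp hx with rfl | hx'
      · exact hmin y (Finset.mem_sdiff.mp hy).1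
      · refine hS'min x hx' y ?_
        rw [Finset.mem_sdiff] at hy ⊢
        refine ⟨Finset.mem_erase.mpr ⟨?_, hy.1⟩, fun h => hy.2 (Finset.mem_insert_of_mem h)⟩
        rintro rfl
        exact hy.2 (Finset.mem_insert_self _ _)

lemma exists_scattered {β : Type*} [DecidableEq β] (c : β → Finset β) (D : ℕ) (hD1 : 1 ≤ D)
    (hD : ∀ p, (c p).card ≤ D) (hself : ∀ p, p ∈ c p)
    (hsymm : ∀ a b, a ∈ c b → b ∈ c a) :
    ∀ (t : ℕ) (A : Finset β), t * D ≤ A.card →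
      ∃ T, T ⊆ A ∧ T.card = t ∧ ∀ p ∈ T, ∀ p' ∈ T, p' ≠ p → p' ∉ c p := by
  intro t
  induction t with
  | zero => exact fun A _ => ⟨∅, empty_subset _, rfl, by simp⟩
  | succ t ih =>
    intro A hA
    have hne : A.Nonempty := Finset.card_pos.mp (by
      have h3 : (t+1)*D = t*D + D := by ring
      omega)
    obtain ⟨p₀, hp₀⟩ := hne
    have hcard : t * D ≤ (A \ c p₀).card := by
      have h1 : A.card ≤ (A \ c p₀).card + (c p₀).card := Finset.card_le_card_sdiff_add_card
      have h2 := hD p₀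
      have h3 : (t+1)*D = t*D + D := by ring
      omega
    obtain ⟨T', hT'sub, hT'card, hT'good⟩ := ih (A \ c p₀) hcard
    have hp₀T' : p₀ ∉ T' := fun h => (Finset.mem_sdiff.mp (hT'sub h)).2 (hself p₀)
    refine ⟨insert p₀ T', Finset.insert_subset hp₀ (hT'sub.trans (Finset.sdiff_subset)), ?_, ?_⟩
    · rw [Finset.card_insert_of_notMem hp₀T', hT'card]
    · intro p hp p' hp' hne'
      rcases Finset.mem_insert.mp hp with rfl | hpT
      · have hp'T : p' ∈ T' := by
          rcases Finset.mem_insert.mp hp' with rfl | h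
          · exact absurd rfl hne'
          · exact h
        exact (Finset.mem_sdiff.mp (hT'sub hp'T)).2
      · rcases Finset.mem_insert.mp hp' with rfl | hp'T
        · intro hmem
          exact (Finset.mem_sdiff.mp (hT'sub hpT)).2 (hsymm _ _ hmem)
        · exact hT'good p hpT p' hp'T hne'

lemma deg_eq_degree {V : Type*} [Fintype V] (G : SimpleGraph V) [DecidableRel G.Adj] (v : V) :
    deg G v = G.degree v := by
  rw [deg, ← SimpleGraph.card_neighborSet_eq_degree, Set.ncard_eq_toFinset_card',
    Set.toFinset_card]

set_option maxHeartbeats 1000000 in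
lemma key_embed {α W : Type} [Fintype α] [Fintype W]
    (Δ : ℕ) (hΔ : 0 < Δ)
    (H : SimpleGraph α) (G : SimpleGraph W) (Xf : Finset W)
    (Pf Qf : Finset α)
    (hunion : ∀ v, v ∈ Pf ∨ v ∈ Qf)
    (hdisj : ∀ v, v ∈ Pf → v ∈ Qf → False)
    (hedge : ∀ u v, H.Adj u v → (u ∈ Pf ↔ v ∈ Qf))
    (hmaxdeg : ∀ v, deg H v ≤ Δ)
    (hdegG : ∀ w, w ∉ Xf → Fintype.card α - 1 ≤ deg G w)
    (hQP : Qf.card ≤ Pf.card)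
    (hnm : Fintype.card α ≤ Fintype.card W)
    (hs1 : 4*Δ*(Δ+1)*((Fintype.card W - Fintype.card α)+1) ≤ Fintype.card α)
    (hX4 : (Δ+1)*(Δ*Δ+1)*Xf.card ≤ Fintype.card α) :
    IsSubgraphEmb H G := by
  classical
  set n := Fintype.card α with hn
  set m := Fintype.card W with hm
  set s := m - n with hs
  set xc := Xf.card with hxc
  -- basic numeric facts
  have hΔ1 : 1 ≤ Δ := hΔ
  have hΔ2 : 2 ≤ Δ + 1 := by omega
  have hΔΔ : 1 ≤ Δ*Δ := Nat.one_le_iff_ne_zero.mpr (by positivity)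
  have h2Δ : 2*Δ ≤ Δ*Δ+1 := by
    rcases Nat.lt_or_ge Δ 2 with h | h
    · interval_cases Δ <;> omega
    · have := Nat.mul_le_mul_right Δ h; omega
  have hn8 : 8 ≤ n := by
    refine le_trans ?_ hs1
    have h1 : 4*1*(1+1)*(0+1) ≤ 4*Δ*(Δ+1)*(s+1) :=
      Nat.mul_le_mul (Nat.mul_le_mul (Nat.mul_le_mul (le_refl 4) hΔ1) hΔ2) (by omega)
    simpa using h1
  have f1 : 8*(Δ*s) ≤ n := by
    refine le_trans ?_ hs1
    calc 8*(Δ*s) = 4*Δ*(2*s) := by ring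
      _ ≤ 4*Δ*((Δ+1)*(s+1)) := Nat.mul_le_mul_left _ (by
            calc 2*s ≤ 2*(s+1) := by omega
              _ ≤ (Δ+1)*(s+1) := Nat.mul_le_mul_right _ hΔ2)
      _ = 4*Δ*(Δ+1)*(s+1) := by ring
  have hb4 : 4 ≤ (Δ+1)*(Δ*Δ+1) := by
    calc 4 = 2*2 := rfl
      _ ≤ (Δ+1)*(Δ*Δ+1) := Nat.mul_le_mul hΔ2 (by omega)
  have hb4Δ : 4*Δ ≤ (Δ+1)*(Δ*Δ+1) := by
    calc 4*Δ = 2*(2*Δ) := by ring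
      _ ≤ (Δ+1)*(Δ*Δ+1) := Nat.mul_le_mul hΔ2 h2Δ
  have f2 : 4*xc ≤ n := by
    refine le_trans ?_ hX4
    exact Nat.mul_le_mul_right xc hb4
  have f3 : 4*(Δ*xc) ≤ n := by
    refine le_trans ?_ hX4
    calc 4*(Δ*xc) = (4*Δ)*xc := by ring
      _ ≤ ((Δ+1)*(Δ*Δ+1))*xc := Nat.mul_le_mul_right xc hb4Δ
  have f4 : 2*((Δ*Δ+1)*xc) ≤ n := by
    refine le_trans ?_ hX4
    calc 2*((Δ*Δ+1)*xc) = (2*(Δ*Δ+1))*xc := by ring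
      _ ≤ ((Δ+1)*(Δ*Δ+1))*xc :=
          Nat.mul_le_mul_right xc (Nat.mul_le_mul_right _ hΔ2)
  have hmn : m = n + s := by omega
  -- partition facts
  have hPQcard : Pf.card + Qf.card = n := by
    have hu : Pf ∪ Qf = univ := by
      apply Finset.eq_univ_of_forall
      intro v; rcases hunion v with h | h
      · exact Finset.mem_union_left _ h
      · exact Finset.mem_union_right _ h
    have hd : Disjoint Pf Qf := Finset.disjoint_left.mpr (fun {a} ha hb => hdisj a ha hb)
    rw [← Finset.card_union_of_disjoint hd, hu, Finset.card_univ]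
  set Pc := Pf.card with hPc
  set Qc := Qf.card with hQc
  have hQc2 : 2*Qc ≤ n := by omega
  -- outside
  set outF : Finset W := univ \ Xf with houtF
  set outc := outF.card with houtc
  have houtm : outc + xc = m := by
    rw [houtc, houtF, Finset.card_sdiff_of_subset (Finset.subset_univ _), Finset.card_univ]
    have : xc ≤ m := by rw [hxc, hm]; exact Finset.card_le_univ Xf
    omega
  have f8 : 3*n ≤ 4*outc := by omega
  -- degrees
  have hmdeg' : ∀ v, (H.neighborFinset v).card ≤ Δ := by
    intro v
    have h := hmaxdeg v
    rw [deg_eq_degree H v] at h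
    exact h
  have hGdeg' : ∀ w ∈ outF, n - 1 ≤ (G.neighborFinset w).card := by
    intro w hw
    have hwX : w ∉ Xf := (Finset.mem_sdiff.mp hw).2
    have h := hdegG w hwX
    rw [deg_eq_degree G w] at h
    exact h
  -- non-neighbour bound
  have hnonnbr : ∀ w ∈ outF, (univ.filter (fun y => y ≠ w ∧ ¬ G.Adj w y)).card ≤ s := by
    intro w hw
    have heq : univ.filter (fun y => y ≠ w ∧ ¬ G.Adj w y)
        = univ \ insert w (G.neighborFinset w) := by
      ext y
      simp only [Finset.mem_filter, Finset.mem_univ, true_and, Finset.mem_sdiff,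
        Finset.mem_insert, SimpleGraph.mem_neighborFinset]
      tauto
    rw [heq, Finset.card_sdiff_of_subset (Finset.subset_univ _), Finset.card_univ,
      Finset.card_insert_of_notMem (by simp)]
    have h1 := hGdeg' w hw
    have h2 : (G.neighborFinset w).card + 1 ≤ m := by
      have : insert w (G.neighborFinset w) ⊆ univ := Finset.subset_univ _
      have := Finset.card_le_card this
      rwa [Finset.card_insert_of_notMem (by simp), Finset.card_univ] at this
    omega
  -- dbar and Afun
  set dbar : W → ℕ := fun x => (outF.filter (fun w => ¬ G.Adj x w)).card with hdbar
  set Afun : W → Finset W := fun x => outF.filter (fun w => G.Adj x w) with hAfun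
  have hAd : ∀ x, (Afun x).card + dbar x = outc := by
    intro x
    simp only [hAfun, hdbar, houtc]
    exact Finset.card_filter_add_card_filter_not _
  have hAsub : ∀ x, Afun x ⊆ outF := fun x => Finset.filter_subset _ _
  have hAadj : ∀ x w, w ∈ Afun x → G.Adj x w := by
    intro x w hw; simp only [hAfun] at hw; exact (Finset.mem_filter.mp hw).2
  have hsum : ∑ x ∈ Xf, dbar x ≤ s * outc := by
    have h1 : ∀ x ∈ Xf, dbar x = ∑ w ∈ outF, if ¬ G.Adj x w then 1 else 0 := by
      intro x _; simp only [hdbar]; rw [Finset.card_filter]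
    rw [Finset.sum_congr rfl h1, Finset.sum_comm]
    have h2 : ∀ w ∈ outF, (∑ x ∈ Xf, if ¬ G.Adj x w then 1 else 0) ≤ s := by
      intro w hw
      have h3 : (∑ x ∈ Xf, if ¬ G.Adj x w then 1 else 0)
          = (Xf.filter (fun x => ¬ G.Adj x w)).card := (Finset.card_filter _ _).symm
      rw [h3]
      refine le_trans (Finset.card_le_card ?_) (hnonnbr w hw)
      intro x hx
      rw [Finset.mem_filter] at hx
      refine Finset.mem_filter.mpr ⟨Finset.mem_univ _, ?_, fun hadj => hx.2 hadj.symm⟩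
      rintro rfl; exact (Finset.mem_sdiff.mp hw).2 hx.1
    calc ∑ w ∈ outF, (∑ x ∈ Xf, if ¬ G.Adj x w then 1 else 0)
        ≤ ∑ _w ∈ outF, s := Finset.sum_le_sum h2
      _ = outc * s := by rw [Finset.sum_const, smul_eq_mul, houtc]
      _ = s * outc := Nat.mul_comm _ _
  -- kept: the t vertices of Xf with smallest dbar
  set t := xc - s with ht
  obtain ⟨kept, hkeptsub, hkeptcard, hkeptmin⟩ := exists_bottom dbar t Xf (by omega)
  -- scattered set T in Pf
  set cmap : α → Finset α :=
    fun p => insert p ((H.neighborFinset p).biUnion (fun q => H.neighborFinset q)) with hcmap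
  have hcD : ∀ p, (cmap p).card ≤ Δ*Δ+1 := by
    intro p
    simp only [hcmap]
    refine le_trans (Finset.card_insert_le _ _) ?_
    have h1 : ((H.neighborFinset p).biUnion (fun q => H.neighborFinset q)).card ≤ Δ*Δ := by
      refine le_trans (Finset.card_biUnion_le) ?_
      calc ∑ q ∈ H.neighborFinset p, (H.neighborFinset q).card
          ≤ ∑ _q ∈ H.neighborFinset p, Δ := Finset.sum_le_sum (fun q _ => hmdeg' q)
        _ = (H.neighborFinset p).card * Δ := by rw [Finset.sum_const, smul_eq_mul]
        _ ≤ Δ*Δ := Nat.mul_le_mul_right Δ (hmdeg' p)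
    omega
  have hcs : ∀ p, p ∈ cmap p := fun p => by
    simp only [hcmap]; exact Finset.mem_insert_self _ _
  have hcsym : ∀ a b, a ∈ cmap b → b ∈ cmap a := by
    intro a b hab
    simp only [hcmap] at hab ⊢
    rcases Finset.mem_insert.mp hab with rfl | h
    · exact Finset.mem_insert_self _ _
    · rw [Finset.mem_biUnion] at h
      obtain ⟨q, hq1, hq2⟩ := h
      simp only [SimpleGraph.mem_neighborFinset] at hq1 hq2
      refine Finset.mem_insert_of_mem ?_
      rw [Finset.mem_biUnion]
      refine ⟨q, ?_, ?_⟩ <;> simp only [SimpleGraph.mem_neighborFinset]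
      · exact hq2.symm
      · exact hq1.symm
  have hTD : t*(Δ*Δ+1) ≤ Pc := by
    have h1 : t*(Δ*Δ+1) ≤ xc*(Δ*Δ+1) := Nat.mul_le_mul_right _ (by omega)
    have h2 : xc*(Δ*Δ+1) = (Δ*Δ+1)*xc := Nat.mul_comm _ _
    omega
  obtain ⟨T, hTsub, hTcard, hTscat⟩ :=
    exists_scattered cmap (Δ*Δ+1) (by omega) hcD hcs hcsym t Pf hTD
  have hcommon : ∀ p ∈ T, ∀ p' ∈ T, p ≠ p' → ∀ q : α, H.Adj p q → H.Adj p' q → False := by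
    intro p hp p' hp' hne q hq hq'
    refine hTscat p hp p' hp' (fun h => hne h.symm) ?_
    simp only [hcmap]
    refine Finset.mem_insert_of_mem ?_
    rw [Finset.mem_biUnion]
    refine ⟨q, ?_, ?_⟩ <;> simp only [SimpleGraph.mem_neighborFinset]
    · exact hq
    · exact hq'.symm
  have hTk : T.card = kept.card := by rw [hTcard, hkeptcard]
  set e : ↥T ≃ ↥kept := T.equivFin.trans ((finCongr hTk).trans kept.equivFin.symm) with he
  haveI hWne : Nonempty W := by
    have h0 : 0 < m := by omega
    rw [hm] at h0
    exact Fintype.card_pos_iff.mp h0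
  haveI hαne : Nonempty α := by
    have h0 : 0 < n := by omega
    rw [hn] at h0
    exact Fintype.card_pos_iff.mp h0
  set w0 : W := Classical.arbitrary W with hw0
  set pq : ↥Qf → Finset α := fun q => T.filter (fun p => H.Adj p ↑q) with hpq
  set xq : ↥Qf → W := fun q =>
    if h : (pq q).Nonempty then
      ↑(e ⟨h.choose, (Finset.mem_filter.mp h.choose_spec).1⟩) else w0 with hxq
  set pfun : W → α := fun x =>
    if hx : x ∈ kept then ↑(e.symm ⟨x, hx⟩) else Classical.arbitrary α with hpfun
  set allowed₁ : ↥Qf → Finset W := fun q =>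
    if (pq q).Nonempty then Afun (xq q) else outF with hallowed₁
  have hxq_kept : ∀ q, (pq q).Nonempty → xq q ∈ kept := by
    intro q h
    simp only [hxq]
    rw [dif_pos h]
    exact (e _).2
  have hxq_spec : ∀ q, (h : (pq q).Nonempty) →
      pfun (xq q) ∈ T ∧ H.Adj (pfun (xq q)) ↑q := by
    intro q h
    have hc := h.choose_spec
    simp only [hpq, Finset.mem_filter] at hc
    have hx : xq q = ↑(e ⟨h.choose, hc.1⟩) := by
      simp only [hxq]
      rw [dif_pos h]
    have hk : xq q ∈ kept := hxq_kept q h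
    have hpe : pfun (xq q) = ↑(e.symm ⟨xq q, hk⟩) := by
      simp only [hpfun]
      rw [dif_pos hk]
    have hsub : (⟨xq q, hk⟩ : ↥kept) = e ⟨h.choose, hc.1⟩ := Subtype.ext hx
    have : e.symm ⟨xq q, hk⟩ = ⟨h.choose, hc.1⟩ := by rw [hsub, Equiv.symm_apply_apply]
    rw [hpe, this]
    exact hc
  have hxq_eq : ∀ (q : ↥Qf) (p : α) (hp : p ∈ T), H.Adj p ↑q → xq q = ↑(e ⟨p, hp⟩) := by
    intro q p hp hadj
    have h : (pq q).Nonempty :=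
      ⟨p, by simp only [hpq, Finset.mem_filter]; exact ⟨hp, hadj⟩⟩
    have hc := h.choose_spec
    simp only [hpq, Finset.mem_filter] at hc
    have hx : xq q = ↑(e ⟨h.choose, hc.1⟩) := by
      simp only [hxq]
      rw [dif_pos h]
    have hce : h.choose = p := by
      by_contra hne
      exact hcommon _ hc.1 _ hp hne ↑q hc.2 hadj
    rw [hx]
    exact congrArg (fun z : ↥T => (↑(e z) : W)) (Subtype.ext hce)
  have hallsub : ∀ q, allowed₁ q ⊆ outF := by
    intro q
    simp only [hallowed₁]
    split
    · exact hAsub _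
    · exact subset_rfl
  have hQcout : Qc ≤ outc := by omega
  have hall₁ : ∀ S : Finset ↥Qf, S.card ≤ (S.biUnion allowed₁).card := by
    intro S
    by_cases hSne : S.Nonempty
    swap
    · rw [Finset.not_nonempty_iff_eq_empty] at hSne
      subst hSne; simp
    by_cases hSb : ∀ q ∈ S, (pq q).Nonempty
    case neg =>
      push_neg at hSb
      obtain ⟨q₀, hq₀S, hq₀⟩ := hSb
      have h1 : outF ⊆ S.biUnion allowed₁ := by
        intro w hw
        rw [Finset.mem_biUnion]
        refine ⟨q₀, hq₀S, ?_⟩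
        simp only [hallowed₁]
        rw [if_neg (Finset.not_nonempty_iff_eq_empty.mpr hq₀)]
        exact hw
      have h2 := Finset.card_le_card h1
      have h3 : S.card ≤ Qf.card := by
        simpa using Finset.card_le_univ S
      omega
    case pos =>
      set K := S.image xq with hK
      set k := K.card with hk
      have hKkept : K ⊆ kept := by
        intro x hx
        obtain ⟨q, hqS, rfl⟩ := Finset.mem_image.mp hx
        exact hxq_kept q (hSb q hqS)
      have hkpos : 1 ≤ k := by
        obtain ⟨q, hq⟩ := hSne
        have h5 : xq q ∈ K := by rw [hK]; exact Finset.mem_image_of_mem _ hq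
        have h6 := Finset.card_pos.mpr ⟨_, h5⟩
        omega
      have hSk : S.card ≤ Δ * k := by
        rw [Finset.card_eq_sum_card_fiberwise
          (f := xq) (t := K) (fun q hq => by rw [hK]; exact Finset.mem_image_of_mem xq hq)]
        have hfib : ∀ x ∈ K, (S.filter (fun q => xq q = x)).card ≤ Δ := by
          intro x hx
          refine le_trans (Finset.card_le_card_of_injOn (fun q => (↑q : α)) ?_ ?_)
            (hmdeg' (pfun x))
          · intro q hq
            rw [Finset.mem_coe, Finset.mem_filter] at hq
            obtain ⟨hqS, hqx⟩ := hq
            have hspec := (hxq_spec q (hSb q hqS)).2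
            rw [hqx] at hspec
            simp only [Finset.mem_coe, SimpleGraph.mem_neighborFinset]
            exact hspec
          · intro a _ b _ hab
            exact Subtype.ext hab
        calc ∑ x ∈ K, (S.filter (fun q => xq q = x)).card
            ≤ ∑ _x ∈ K, Δ := Finset.sum_le_sum hfib
          _ = k * Δ := by rw [Finset.sum_const, smul_eq_mul]
          _ = Δ * k := Nat.mul_comm _ _
      by_cases hks : k ≤ s
      · obtain ⟨x₀, hx₀K, hx₀min⟩ := Finset.exists_min_image K dbar (Finset.card_pos.mp (by omega))
        obtain ⟨q₀, hq₀S, hq₀x⟩ := Finset.mem_image.mp (by rw [hK] at hx₀K; exact hx₀K)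
        have hsub : Afun x₀ ⊆ S.biUnion allowed₁ := by
          intro w hw
          rw [Finset.mem_biUnion]
          refine ⟨q₀, hq₀S, ?_⟩
          simp only [hallowed₁]
          rw [if_pos (hSb q₀ hq₀S), hq₀x]
          exact hw
        refine le_trans (le_trans hSk ?_) (Finset.card_le_card hsub)
        -- Δ*k ≤ (Afun x₀).card
        have hx₀kept : x₀ ∈ kept := hKkept hx₀K
        have ht1 : 1 ≤ t := by
          have h7 := Finset.card_pos.mpr ⟨x₀, hx₀kept⟩
          omega
        set D := (Xf \ kept) ∪ K with hD
        have hDdisj : Disjoint (Xf \ kept) K := by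
          rw [Finset.disjoint_right]
          intro x hxK hxsd
          exact (Finset.mem_sdiff.mp hxsd).2 (hKkept hxK)
        have hDcard : D.card = s + k := by
          rw [hD, Finset.card_union_of_disjoint hDdisj, Finset.card_sdiff_of_subset hkeptsub, hkeptcard]
          omega
        have hDsub : D ⊆ Xf := Finset.union_subset Finset.sdiff_subset (hKkept.trans hkeptsub)
        have hDmin : ∀ y ∈ D, dbar x₀ ≤ dbar y := by
          intro y hy
          rcases Finset.mem_union.mp hy with h | h
          · exact hkeptmin x₀ hx₀kept y h
          · exact hx₀min y h
        have hsum2 : (s+k) * dbar x₀ ≤ s * outc := by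
          calc (s+k) * dbar x₀ = D.card • dbar x₀ := by rw [hDcard, smul_eq_mul]
            _ ≤ ∑ y ∈ D, dbar y := Finset.card_nsmul_le_sum D dbar (dbar x₀) hDmin
            _ ≤ ∑ y ∈ Xf, dbar y := Finset.sum_le_sum_of_subset hDsub
            _ ≤ s * outc := hsum
        have houtk : Δ*(s+k) ≤ outc := by
          have h1 : Δ*(s+k) ≤ 2*(Δ*s) := by
            have h2 : Δ*(s+k) ≤ Δ*(2*s) := Nat.mul_le_mul_left _ (by omega)
            have h3 : Δ*(2*s) = 2*(Δ*s) := by ring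
            omega
          omega
        have h1 : (s+k) * ((Afun x₀).card) + (s+k) * dbar x₀ = (s+k) * outc := by
          rw [← Nat.mul_add, hAd x₀]
        have h2 : k * (Δ*(s+k)) ≤ k * outc := Nat.mul_le_mul_left _ houtk
        have hd : (s+k)*outc = s*outc + k*outc := by ring
        have hr : k * (Δ*(s+k)) = (s+k) * (Δ*k) := by ring
        have h3 : (s+k) * (Δ*k) ≤ (s+k) * (Afun x₀).card := by omega
        exact Nat.le_of_mul_le_mul_left h3 (by omega)
      · -- k ≥ s+1 : the union is all of outF
        have houtsub : outF ⊆ S.biUnion allowed₁ := by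
          intro w hw
          by_contra hwn
          have hKbad : K ⊆ univ.filter (fun y => y ≠ w ∧ ¬ G.Adj w y) := by
            intro x hx
            obtain ⟨q, hqS, hqx⟩ := Finset.mem_image.mp (by rw [hK] at hx; exact hx)
            have hq := hSb q hqS
            have hna : w ∉ Afun x := by
              intro hwa
              refine hwn (Finset.mem_biUnion.mpr ⟨q, hqS, ?_⟩)
              simp only [hallowed₁]
              rw [if_pos hq, hqx]
              exact hwa
            have hnadj : ¬ G.Adj x w := by
              intro hadj
              exact hna (by simp only [hAfun]; exact Finset.mem_filter.mpr ⟨hw, hadj⟩)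
            refine Finset.mem_filter.mpr ⟨Finset.mem_univ _, ?_, fun h => hnadj h.symm⟩
            rintro rfl
            exact (Finset.mem_sdiff.mp hw).2 (hkeptsub (hKkept hx))
          have h8 := Finset.card_le_card hKbad
          have h9 := hnonnbr w hw
          omega
        have h2 := Finset.card_le_card houtsub
        have h3 : Δ*k ≤ Δ*xc := Nat.mul_le_mul_left _ (by
          have h5 : K.card ≤ kept.card := Finset.card_le_card hKkept
          omega)
        omega
  obtain ⟨fQ, hfQinj, hfQmem⟩ :=
    (Finset.all_card_le_biUnion_card_iff_exists_injective allowed₁).mp hall₁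
  have hfQout : ∀ q, fQ q ∈ outF := fun q => hallsub q (hfQmem q)
  -- image of Q and remaining slots
  set Qimg : Finset W := univ.image (fun q : ↥Qf => fQ q) with hQimg
  have hQimgcard : Qimg.card = Qc := by
    rw [hQimg, Finset.card_image_of_injective _ hfQinj, Finset.card_univ, Fintype.card_coe]
  have hQimgout : Qimg ⊆ outF := by
    intro w hw
    obtain ⟨q, _, rfl⟩ := Finset.mem_image.mp hw
    exact hfQout q
  set Rf : Finset W := outF \ Qimg with hRf
  have hRcval : Rf.card + Qc = outc := by
    rw [hRf, Finset.card_sdiff_of_subset hQimgout, hQimgcard]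
    have := Finset.card_le_card hQimgout
    omega
  have hRc2 : 2*(Δ*s) ≤ Rf.card := by omega
  have hPcT : Pc - t ≤ Rf.card := by omega
  -- bad sets
  set bad : ↥Pf → Finset W := fun p =>
    Rf.filter (fun w => ∃ q : ↥Qf, H.Adj ↑p ↑q ∧ ¬ G.Adj w (fQ q)) with hbad
  have hbadrow : ∀ p : ↥Pf, (bad p).card ≤ Δ * s := by
    intro p
    have hsub : bad p ⊆ (univ.filter (fun q : ↥Qf => H.Adj ↑p ↑q)).biUnion
        (fun q => Rf.filter (fun w => ¬ G.Adj w (fQ q))) := by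
      intro w hw
      simp only [hbad, Finset.mem_filter] at hw
      obtain ⟨hwR, q, hq1, hq2⟩ := hw
      rw [Finset.mem_biUnion]
      exact ⟨q, Finset.mem_filter.mpr ⟨Finset.mem_univ _, hq1⟩,
        Finset.mem_filter.mpr ⟨hwR, hq2⟩⟩
    refine le_trans (Finset.card_le_card hsub) (le_trans Finset.card_biUnion_le ?_)
    have hcount : (univ.filter (fun q : ↥Qf => H.Adj ↑p ↑q)).card ≤ Δ := by
      refine le_trans (Finset.card_le_card_of_injOn (fun q => (↑q : α)) ?_ ?_) (hmdeg' ↑p)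
      · intro q hq
        rw [Finset.mem_coe, Finset.mem_filter] at hq
        simp only [Finset.mem_coe, SimpleGraph.mem_neighborFinset]
        exact hq.2
      · intro a _ b _ hab; exact Subtype.ext hab
    have hinner : ∀ q : ↥Qf, (Rf.filter (fun w => ¬ G.Adj w (fQ q))).card ≤ s := by
      intro q
      refine le_trans (Finset.card_le_card ?_) (hnonnbr (fQ q) (hfQout q))
      intro w hw
      rw [Finset.mem_filter] at hw
      refine Finset.mem_filter.mpr ⟨Finset.mem_univ _, ?_, fun h => hw.2 h.symm⟩
      intro heq
      have hwQ : w ∈ Qimg := by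
        rw [heq, hQimg]; exact Finset.mem_image_of_mem _ (Finset.mem_univ q)
      have hwR := hw.1
      rw [hRf] at hwR
      exact (Finset.mem_sdiff.mp hwR).2 hwQ
    calc ∑ q ∈ univ.filter (fun q : ↥Qf => H.Adj ↑p ↑q),
          (Rf.filter (fun w => ¬ G.Adj w (fQ q))).card
        ≤ ∑ _q ∈ univ.filter (fun q : ↥Qf => H.Adj ↑p ↑q), s :=
          Finset.sum_le_sum (fun q _ => hinner q)
      _ = (univ.filter (fun q : ↥Qf => H.Adj ↑p ↑q)).card * s := by
          rw [Finset.sum_const, smul_eq_mul]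
      _ ≤ Δ * s := Nat.mul_le_mul_right s hcount
  have hbadcol : ∀ w ∈ Rf, (univ.filter (fun p : ↥Pf => w ∈ bad p)).card ≤ Δ * s := by
    intro w hwR
    have hwout : w ∈ outF := by
      rw [hRf] at hwR
      exact (Finset.mem_sdiff.mp hwR).1
    set badQ : Finset ↥Qf := univ.filter (fun q => ¬ G.Adj w (fQ q)) with hbadQ
    have hbadQcard : badQ.card ≤ s := by
      refine le_trans (Finset.card_le_card_of_injOn (fun q => fQ q) ?_ ?_) (hnonnbr w hwout)
      · intro q hq
        rw [hbadQ, Finset.mem_coe, Finset.mem_filter] at hq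
        refine Finset.mem_coe.mpr <| Finset.mem_filter.mpr ⟨Finset.mem_univ _, ?_, hq.2⟩
        intro heq
        have hwQ : w ∈ Qimg := by
          rw [← heq, hQimg]; exact Finset.mem_image_of_mem _ (Finset.mem_univ q)
        rw [hRf] at hwR
        exact (Finset.mem_sdiff.mp hwR).2 hwQ
      · intro a _ b _ hab; exact hfQinj hab
    have hsub : univ.filter (fun p : ↥Pf => w ∈ bad p) ⊆
        badQ.biUnion (fun q => univ.filter (fun p : ↥Pf => H.Adj ↑p ↑q)) := by
      intro p hp
      rw [Finset.mem_filter] at hp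
      have hw' := hp.2
      simp only [hbad, Finset.mem_filter] at hw'
      obtain ⟨_, q, hq1, hq2⟩ := hw'
      rw [Finset.mem_biUnion]
      exact ⟨q, by rw [hbadQ]; exact Finset.mem_filter.mpr ⟨Finset.mem_univ _, hq2⟩,
        Finset.mem_filter.mpr ⟨Finset.mem_univ _, hq1⟩⟩
    refine le_trans (Finset.card_le_card hsub) (le_trans Finset.card_biUnion_le ?_)
    have hinner : ∀ q : ↥Qf, (univ.filter (fun p : ↥Pf => H.Adj ↑p ↑q)).card ≤ Δ := by
      intro q
      refine le_trans (Finset.card_le_card_of_injOn (fun p => (↑p : α)) ?_ ?_) (hmdeg' ↑q)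
      · intro p hp
        rw [Finset.mem_coe, Finset.mem_filter] at hp
        simp only [Finset.mem_coe, SimpleGraph.mem_neighborFinset]
        exact hp.2.symm
      · intro a _ b _ hab; exact Subtype.ext hab
    calc ∑ q ∈ badQ, (univ.filter (fun p : ↥Pf => H.Adj ↑p ↑q)).card
        ≤ ∑ _q ∈ badQ, Δ := Finset.sum_le_sum (fun q _ => hinner q)
      _ = badQ.card * Δ := by rw [Finset.sum_const, smul_eq_mul]
      _ ≤ s * Δ := Nat.mul_le_mul_right Δ hbadQcard
      _ = Δ * s := Nat.mul_comm _ _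
  -- second Hall system
  set gT : ↥Pf → W := fun p => if h : (↑p : α) ∈ T then ↑(e ⟨↑p, h⟩) else w0 with hgT
  set allowed₂ : ↥Pf → Finset W := fun p =>
    if (↑p : α) ∈ T then {gT p} else Rf \ bad p with hallowed₂
  have hall₂ : ∀ S : Finset ↥Pf, S.card ≤ (S.biUnion allowed₂).card := by
    intro S
    set S₁ := S.filter (fun p : ↥Pf => (p : α) ∈ T) with hS₁
    set S₂ := S.filter (fun p : ↥Pf => ¬ ((p : α) ∈ T)) with hS₂
    have hcards : S₁.card + S₂.card = S.card :=
      Finset.card_filter_add_card_filter_not _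
    have himg : S₁.image gT ⊆ S.biUnion allowed₂ := by
      intro w hw
      obtain ⟨p, hpS₁, rfl⟩ := Finset.mem_image.mp hw
      have hpT := (Finset.mem_filter.mp hpS₁).2
      refine Finset.mem_biUnion.mpr ⟨p, (Finset.mem_filter.mp hpS₁).1, ?_⟩
      simp only [hallowed₂]
      rw [if_pos hpT]
      exact Finset.mem_singleton_self _
    have himgcard : (S₁.image gT).card = S₁.card := by
      refine Finset.card_image_of_injOn ?_
      intro a ha b hb hab
      have haT := (Finset.mem_filter.mp ha).2
      have hbT := (Finset.mem_filter.mp hb).2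
      simp only [hgT] at hab
      rw [dif_pos haT, dif_pos hbT] at hab
      have h1 : (⟨↑a, haT⟩ : ↥T) = ⟨↑b, hbT⟩ := e.injective (Subtype.ext hab)
      have h2 : (a : α) = (b : α) := congrArg (Subtype.val : ↥T → α) h1
      exact Subtype.ext h2
    have hb2sub : S₂.biUnion allowed₂ ⊆ S.biUnion allowed₂ :=
      Finset.biUnion_subset_biUnion_of_subset_left _ (Finset.filter_subset _ _)
    have hdisj2 : Disjoint (S₁.image gT) (S₂.biUnion allowed₂) := by
      rw [Finset.disjoint_left]
      intro w hw1 hw2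
      obtain ⟨p, hpS₁, rfl⟩ := Finset.mem_image.mp hw1
      have hpT := (Finset.mem_filter.mp hpS₁).2
      have hwk : gT p ∈ kept := by
        simp only [hgT]; rw [dif_pos hpT]; exact (e _).2
      obtain ⟨p', hp'S₂, hw'⟩ := Finset.mem_biUnion.mp hw2
      have hp'T := (Finset.mem_filter.mp hp'S₂).2
      simp only [hallowed₂] at hw'
      rw [if_neg hp'T] at hw'
      have hR := (Finset.mem_sdiff.mp hw').1
      rw [hRf] at hR
      have hout := (Finset.mem_sdiff.mp hR).1
      rw [houtF] at hout
      exact (Finset.mem_sdiff.mp hout).2 (hkeptsub hwk)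
    have hunion2 : (S₁.image gT) ∪ (S₂.biUnion allowed₂) ⊆ S.biUnion allowed₂ :=
      Finset.union_subset himg hb2sub
    have hclen := Finset.card_le_card hunion2
    rw [Finset.card_union_of_disjoint hdisj2, himgcard] at hclen
    have hS₂b : S₂.card ≤ (S₂.biUnion allowed₂).card := by
      by_cases hS₂ne : S₂.Nonempty
      swap
      · rw [Finset.not_nonempty_iff_eq_empty] at hS₂ne
        rw [hS₂ne]; simp
      by_cases hcase : S₂.card + Δ*s ≤ Rf.card
      · obtain ⟨p₀, hp₀⟩ := hS₂ne
        have hp₀T := (Finset.mem_filter.mp hp₀).2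
        have hsub0 : Rf \ bad p₀ ⊆ S₂.biUnion allowed₂ := by
          intro w hw
          refine Finset.mem_biUnion.mpr ⟨p₀, hp₀, ?_⟩
          simp only [hallowed₂]
          rw [if_neg hp₀T]
          exact hw
        have h5 := Finset.card_le_card hsub0
        have h6 : Rf.card ≤ (Rf \ bad p₀).card + (bad p₀).card :=
          Finset.card_le_card_sdiff_add_card
        have h7 := hbadrow p₀
        omega
      · have hRsub : Rf ⊆ S₂.biUnion allowed₂ := by
          intro w hw
          by_contra hwn
          have hallbad : S₂ ⊆ univ.filter (fun p : ↥Pf => w ∈ bad p) := by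
            intro p hp
            have hpT := (Finset.mem_filter.mp hp).2
            refine Finset.mem_filter.mpr ⟨Finset.mem_univ _, ?_⟩
            by_contra hwb
            refine hwn (Finset.mem_biUnion.mpr ⟨p, hp, ?_⟩)
            simp only [hallowed₂]
            rw [if_neg hpT]
            exact Finset.mem_sdiff.mpr ⟨hw, hwb⟩
          have h8 := Finset.card_le_card hallbad
          have h9 := hbadcol w hw
          omega
        have h10 := Finset.card_le_card hRsub
        have h11 : S₂.card ≤ Pc - t := by
          have hsub3 : S₂.image (fun p : ↥Pf => (p : α)) ⊆ Pf \ T := by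
            intro a ha
            obtain ⟨p, hpS₂, rfl⟩ := Finset.mem_image.mp ha
            exact Finset.mem_sdiff.mpr ⟨p.2, (Finset.mem_filter.mp hpS₂).2⟩
          have h12 := Finset.card_le_card hsub3
          have h13 : (S₂.image (fun p : ↥Pf => (p : α))).card = S₂.card :=
            Finset.card_image_of_injOn (fun a _ b _ hab => Subtype.ext hab)
          have h14 : (Pf \ T).card = Pc - t := by rw [Finset.card_sdiff_of_subset hTsub, hTcard]
          omega
        omega
    omega
  obtain ⟨fP, hfPinj, hfPmem⟩ :=
    (Finset.all_card_le_biUnion_card_iff_exists_injective allowed₂).mp hall₂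
  have hfP_T : ∀ (p : ↥Pf), ((p : α) ∈ T) → fP p = gT p := by
    intro p h
    have h1 := hfPmem p
    simp only [hallowed₂] at h1
    rw [if_pos h] at h1
    exact Finset.mem_singleton.mp h1
  have hfP_R : ∀ (p : ↥Pf), (p : α) ∉ T → fP p ∈ Rf \ bad p := by
    intro p h
    have h1 := hfPmem p
    simp only [hallowed₂] at h1
    rwa [if_neg h] at h1
  have hPofQ : ∀ v : α, v ∉ Pf → v ∈ Qf := fun v hv => (hunion v).resolve_left hv
  set F : α → W := fun v => if hv : v ∈ Pf then fP ⟨v, hv⟩ else fQ ⟨v, hPofQ v hv⟩ with hF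
  have hFP : ∀ (v : α) (hv : v ∈ Pf), F v = fP ⟨v, hv⟩ := by
    intro v hv; simp only [hF]; rw [dif_pos hv]
  have hFQ : ∀ (v : α) (hv : v ∉ Pf), F v = fQ ⟨v, hPofQ v hv⟩ := by
    intro v hv; simp only [hF]; rw [dif_neg hv]
  have hPQcross : ∀ (a b : α) (ha : a ∈ Pf) (hb : b ∉ Pf),
      fP ⟨a, ha⟩ = fQ ⟨b, hPofQ b hb⟩ → False := by
    intro a b ha hb hab
    by_cases haT : a ∈ T
    · have h1 : gT ⟨a, ha⟩ ∈ kept := by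
        simp only [hgT]; rw [dif_pos haT]; exact (e _).2
      have h2 := hfQout ⟨b, hPofQ b hb⟩
      rw [hfP_T ⟨a, ha⟩ haT] at hab
      rw [hab] at h1
      rw [houtF] at h2
      exact (Finset.mem_sdiff.mp h2).2 (hkeptsub h1)
    · have h1 := hfP_R ⟨a, ha⟩ haT
      have h2 : fP ⟨a, ha⟩ ∈ Rf := (Finset.mem_sdiff.mp h1).1
      rw [hRf] at h2
      have h3 := (Finset.mem_sdiff.mp h2).2
      rw [hab] at h3
      exact h3 (by rw [hQimg]; exact Finset.mem_image_of_mem _ (Finset.mem_univ _))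
  have hFinj : Function.Injective F := by
    intro a b hab
    by_cases ha : a ∈ Pf <;> by_cases hb : b ∈ Pf
    · rw [hFP a ha, hFP b hb] at hab
      exact congrArg Subtype.val (hfPinj hab)
    · rw [hFP a ha, hFQ b hb] at hab
      exact absurd hab (fun h => hPQcross a b ha hb h)
    · rw [hFQ a ha, hFP b hb] at hab
      exact absurd hab.symm (fun h => hPQcross b a hb ha h)
    · rw [hFQ a ha, hFQ b hb] at hab
      exact congrArg Subtype.val (hfQinj hab)
  have hadjPQ : ∀ (u v : α) (hu : u ∈ Pf), H.Adj u v → G.Adj (F u) (F v) := by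
    intro u v hu hadj
    have hvQ : v ∈ Qf := (hedge u v hadj).mp hu
    have hvP : v ∉ Pf := fun h => hdisj v h hvQ
    rw [hFP u hu, hFQ v hvP]
    by_cases huT : u ∈ T
    · have h1 : fP ⟨u, hu⟩ = gT ⟨u, hu⟩ := hfP_T _ huT
      have h2 : gT ⟨u, hu⟩ = ↑(e ⟨u, huT⟩) := by
        simp only [hgT]; rw [dif_pos huT]
      have hne : (pq ⟨v, hPofQ v hvP⟩).Nonempty :=
        ⟨u, by simp only [hpq, Finset.mem_filter]; exact ⟨huT, hadj⟩⟩
      have h3 := hfQmem ⟨v, hPofQ v hvP⟩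
      simp only [hallowed₁] at h3
      rw [if_pos hne] at h3
      have h4 : xq ⟨v, hPofQ v hvP⟩ = ↑(e ⟨u, huT⟩) := hxq_eq _ u huT hadj
      rw [h4] at h3
      have h5 := hAadj _ _ h3
      rw [h1, h2]
      exact h5
    · have h1 := hfP_R ⟨u, hu⟩ huT
      have h2 := (Finset.mem_sdiff.mp h1).2
      by_contra hnadj
      refine h2 ?_
      simp only [hbad, Finset.mem_filter]
      exact ⟨(Finset.mem_sdiff.mp h1).1, ⟨v, hPofQ v hvP⟩, hadj, hnadj⟩
  refine ⟨⟨F, hFinj⟩, ?_⟩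
  intro u v hadj
  by_cases hu : u ∈ Pf
  · exact hadjPQ u v hu hadj
  · have hvP : v ∈ Pf := (hedge v u hadj.symm).mpr (hPofQ u hu)
    exact (hadjPQ v u hvP hadj.symm).symm

theorem small_case (Δ : ℕ) (hΔ : 0 < Δ) (α W : Type) [Fintype α] [Fintype W]
    (H : SimpleGraph α) (G : SimpleGraph W) (X : Set W) (hXproper : X ≠ Set.univ)
    (hbip : H.Colorable 2) (hmaxdeg : ∀ v, deg H v ≤ Δ)
    (hdeg : ∀ w : W, w ∉ X → Fintype.card α - 1 ≤ deg G w)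
    (hsize : (Fintype.card W : ℝ) ≤
      (1 + 1 / (4 * (Δ : ℝ) * ((Δ : ℝ) + 1))) * (Fintype.card α : ℝ) - 1)
    (hX : (X.ncard : ℝ) ≤ (Fintype.card α : ℝ) / (((Δ : ℝ) + 1) * ((Δ : ℝ) ^ 2 + 1))) :
    IsSubgraphEmb H G := by
  classical
  set n := Fintype.card α with hn
  set m := Fintype.card W with hm
  have hcpos : (0:ℝ) < 4 * (Δ:ℝ) * ((Δ:ℝ)+1) := by positivity
  have hnpos : 0 < n := by
    rcases Nat.eq_zero_or_pos n with h | h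
    · exfalso
      rw [h] at hsize
      push_cast at hsize
      have h0 : (0:ℝ) ≤ (m:ℝ) := Nat.cast_nonneg m
      nlinarith
    · exact h
  have hXex : ∃ w, w ∉ X := by
    by_contra h
    push_neg at h
    exact hXproper (Set.eq_univ_of_forall h)
  obtain ⟨w₀, hw₀⟩ := hXex
  have hnm : n ≤ m := by
    have h1 := hdeg w₀ hw₀
    rw [deg_eq_degree G w₀] at h1
    have h2 : G.degree w₀ < m := G.degree_lt_card_verts w₀
    omega
  have hs1 : 4*Δ*(Δ+1)*((m - n)+1) ≤ n := by
    rw [← Nat.cast_le (α := ℝ)]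
    push_cast [Nat.cast_sub hnm]
    have hinv : (4*(Δ:ℝ)*((Δ:ℝ)+1)) * (1/(4*(Δ:ℝ)*((Δ:ℝ)+1))) = 1 := by field_simp
    have h2 : (m:ℝ) + 1 - n ≤ (1/(4*(Δ:ℝ)*((Δ:ℝ)+1)))*n := by nlinarith [hsize]
    nlinarith [mul_le_mul_of_nonneg_left h2 (le_of_lt hcpos), hinv]
  have hXfin : X.Finite := Set.toFinite X
  set Xf := hXfin.toFinset with hXf
  have hXmem : ∀ w, w ∈ Xf ↔ w ∈ X := fun w => hXfin.mem_toFinset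
  have hXcard : (X.ncard : ℝ) = (Xf.card : ℝ) := by
    rw [Set.ncard_eq_toFinset_card X hXfin]
  have hdpos : (0:ℝ) < ((Δ:ℝ)+1) * ((Δ:ℝ)^2+1) := by positivity
  have hX4 : (Δ+1)*(Δ*Δ+1)*Xf.card ≤ n := by
    rw [← Nat.cast_le (α := ℝ)]
    push_cast
    have h1 : (X.ncard : ℝ) * (((Δ:ℝ)+1)*((Δ:ℝ)^2+1)) ≤ n := (le_div_iff₀ hdpos).mp hX
    nlinarith [h1, hXcard]
  obtain ⟨C⟩ := hbip
  set A0 : Finset α := univ.filter (fun v => C v = 0) with hA0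
  set A1 : Finset α := univ.filter (fun v => ¬ (C v = 0)) with hA1
  have hunion : ∀ v, v ∈ A0 ∨ v ∈ A1 := by
    intro v
    by_cases h : C v = 0
    · left; exact Finset.mem_filter.mpr ⟨Finset.mem_univ _, h⟩
    · right; exact Finset.mem_filter.mpr ⟨Finset.mem_univ _, h⟩
  have hdisj : ∀ v, v ∈ A0 → v ∈ A1 → False := by
    intro v h0 h1
    exact (Finset.mem_filter.mp h1).2 (Finset.mem_filter.mp h0).2
  have hedge01 : ∀ u v, H.Adj u v → (u ∈ A0 ↔ v ∈ A1) := by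
    intro u v hadj
    have hne := C.valid hadj
    constructor
    · intro hu
      have hu0 := (Finset.mem_filter.mp hu).2
      refine Finset.mem_filter.mpr ⟨Finset.mem_univ _, ?_⟩
      intro hv0
      exact hne (by rw [hu0, hv0])
    · intro hv
      have hv0 := (Finset.mem_filter.mp hv).2
      refine Finset.mem_filter.mpr ⟨Finset.mem_univ _, ?_⟩
      have h01 : ∀ x : Fin 2, x = 0 ∨ x = 1 := by decide
      rcases h01 (C u) with h | h
      · exact h
      · rcases h01 (C v) with h' | h'
        · exact absurd h' hv0
        · exact absurd (by rw [h, h']) hne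
  have hedge10 : ∀ u v, H.Adj u v → (u ∈ A1 ↔ v ∈ A0) := by
    intro u v hadj
    constructor
    · intro hu
      have hu0 : u ∉ A0 := fun h => hdisj u h hu
      have hv1 : v ∉ A1 := fun h => hu0 ((hedge01 u v hadj).mpr h)
      exact (hunion v).resolve_right hv1
    · intro hv
      exact (hedge01 v u hadj.symm).mp hv
  have hdeg' : ∀ w, w ∉ Xf → n - 1 ≤ deg G w := by
    intro w hw
    exact hdeg w (fun h => hw ((hXmem w).mpr h))
  rcases le_total A1.card A0.card with hle | hle
  · exact key_embed Δ hΔ H G Xf A0 A1 hunion hdisj hedge01 hmaxdeg hdeg' hle hnm hs1 hX4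
  · exact key_embed Δ hΔ H G Xf A1 A0 (fun v => (hunion v).symm)
      (fun v h1 h0 => hdisj v h0 h1) hedge10 hmaxdeg hdeg' hle hnm hs1 hX4
end

section
/- If k > 0 and G is a non-null graph, then there exist a subgraph G′ of G and a set X ⊊ V(G′) such that |X| ≤ 2k and the pair (G′, X) is (δ(G), k)-dense, where δ(G) is the minimum degree of G. -/
open SimpleGraph

noncomputable def degIn {V : Type} (G : SimpleGraph V) (S : Set V) (v : V) : ℕ :=
  (S ∩ G.neighborSet v).ncard

lemma deg_coe_induce {V : Type} (G : SimpleGraph V) (S : Set V)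
    (v : ((⊤ : G.Subgraph).induce S).verts) :
    deg ((⊤ : G.Subgraph).induce S).coe v = degIn G S ↑v := by
  classical
  rw [deg, degIn, ← Set.ncard_image_of_injective _ Subtype.val_injective]
  congr 1
  ext w
  constructor
  · rintro ⟨u, hu, rfl⟩
    simp only [mem_neighborSet, Subgraph.coe_adj, Subgraph.induce_adj] at hu
    exact ⟨u.2, hu.2.2⟩
  · rintro ⟨hw, hadj⟩
    exact ⟨⟨w, hw⟩, by simp [Subgraph.coe_adj, Subgraph.induce_adj, v.2, hw]; exact ⟨v.2, hadj⟩, rfl⟩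

lemma isSeparation_symm {V : Type*} {G : SimpleGraph V} {A B : Set V}
    (h : IsSeparation G A B) : IsSeparation G B A :=
  ⟨by rw [Set.union_comm]; exact h.1, h.2.2.1, h.2.1,
    fun u hu v hv hadj => h.2.2.2 v hv u hu hadj.symm⟩

lemma step (k : ℝ) {V : Type} [Fintype V] (G : SimpleGraph V) (d : ℕ)
    (S X : Set V) (hXS : X ⊆ S)
    (hdeg : ∀ v ∈ S \ X, d ≤ degIn G S v)
    (A B : Set ((⊤ : G.Subgraph).induce S).verts)
    (hsep : IsSeparation ((⊤ : G.Subgraph).induce S).coe A B)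
    (hord : ((A ∩ B).ncard : ℝ) ≤ k)
    (hA : ¬ A \ B ⊆ Subtype.val ⁻¹' X)
    (hX : ((X ∩ (Subtype.val '' A \ Subtype.val '' B)).ncard : ℝ) ≤ k) :
    ∃ S₁ X₁ : Set V, S₁ ⊆ S ∧ S₁ ≠ S ∧ S₁.Nonempty ∧ X₁ ⊆ S₁ ∧ X₁ ≠ S₁ ∧
      (X₁.ncard : ℝ) ≤ 2 * k ∧ ∀ v ∈ S₁ \ X₁, d ≤ degIn G S₁ v := by
  classical
  set A₀ : Set V := Subtype.val '' A with hA₀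
  set B₀ : Set V := Subtype.val '' B with hB₀
  refine ⟨A₀, (X ∩ (A₀ \ B₀)) ∪ (A₀ ∩ B₀), ?_, ?_, ?_, ?_, ?_, ?_, ?_⟩
  · rintro x ⟨u, _, rfl⟩; exact u.2
  · -- S₁ ≠ S
    obtain ⟨b, hbB, hbA⟩ := Set.not_subset.1 hsep.2.2.1
    intro h
    have : (b : V) ∈ A₀ := by rw [h]; exact b.2
    obtain ⟨b', hb', he⟩ := this
    exact hbA (by rwa [Subtype.val_injective he] at hb')
  · obtain ⟨a, haAB, _⟩ := Set.not_subset.1 hA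
    exact ⟨a, a, haAB.1, rfl⟩
  · rintro x (⟨_, hx⟩ | hx)
    · exact hx.1
    · exact hx.1
  · -- X₁ ≠ S₁
    obtain ⟨a, haAB, haX⟩ := Set.not_subset.1 hA
    intro h
    have haA₀ : (a : V) ∈ A₀ := ⟨a, haAB.1, rfl⟩
    have haB₀ : (a : V) ∉ B₀ := by
      rintro ⟨b, hb, he⟩
      exact haAB.2 (by rwa [Subtype.val_injective he] at hb)
    rw [← h] at haA₀
    rcases haA₀ with ⟨hx, _⟩ | ⟨_, hb⟩
    · exact haX hx
    · exact haB₀ hb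
  · -- card bound
    have h1 : (A₀ ∩ B₀).ncard = (A ∩ B).ncard := by
      rw [hA₀, hB₀, ← Set.image_inter Subtype.val_injective,
        Set.ncard_image_of_injective _ Subtype.val_injective]
    have h2 := Set.ncard_union_le (X ∩ (A₀ \ B₀)) (A₀ ∩ B₀)
    have := hX
    push_cast
    calc (((X ∩ (A₀ \ B₀)) ∪ (A₀ ∩ B₀)).ncard : ℝ)
        ≤ ((X ∩ (A₀ \ B₀)).ncard : ℝ) + ((A₀ ∩ B₀).ncard : ℝ) := by exact_mod_cast h2
      _ ≤ k + k := by rw [h1]; exact add_le_add hX hord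
      _ = 2 * k := by ring
  · -- degree
    rintro v ⟨hvA₀, hvX₁⟩
    have hvB₀ : v ∉ B₀ := fun hb => hvX₁ (Or.inr ⟨hvA₀, hb⟩)
    have hvX : v ∉ X := fun hx => hvX₁ (Or.inl ⟨hx, hvA₀, hvB₀⟩)
    have hvS : v ∈ S := by obtain ⟨u, _, rfl⟩ := hvA₀; exact u.2
    have hd := hdeg v ⟨hvS, hvX⟩
    refine le_trans hd (Set.ncard_le_ncard ?_ (Set.toFinite _))
    rintro u ⟨huS, huN⟩
    refine ⟨?_, huN⟩
    have hu' : (⟨u, huS⟩ : ((⊤ : G.Subgraph).induce S).verts) ∈ A ∪ B := by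
      rw [hsep.1]; trivial
    have hvA : (⟨v, hvS⟩ : ((⊤ : G.Subgraph).induce S).verts) ∈ A := by
      obtain ⟨w, hw, he⟩ := hvA₀
      rwa [show (⟨v, hvS⟩ : ((⊤ : G.Subgraph).induce S).verts) = w from Subtype.ext he.symm]
    have hvB : (⟨v, hvS⟩ : ((⊤ : G.Subgraph).induce S).verts) ∉ B := by
      intro hb; exact hvB₀ ⟨_, hb, rfl⟩
    rcases hu' with hu' | hu'
    · exact ⟨_, hu', rfl⟩
    · by_cases huA : (⟨u, huS⟩ : ((⊤ : G.Subgraph).induce S).verts) ∈ A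
      · exact ⟨_, huA, rfl⟩
      · exfalso
        refine hsep.2.2.2 _ ⟨hvA, hvB⟩ _ ⟨hu', huA⟩ ?_
        simp only [Subgraph.coe_adj, Subgraph.induce_adj]
        exact ⟨hvS, huS, huN⟩

lemma key (k : ℝ) {V : Type} [Fintype V] (G : SimpleGraph V) (d : ℕ) :
    ∀ n : ℕ, ∀ S : Set V, S.ncard = n → ∀ X : Set V, X ⊆ S → X ≠ S →
      (X.ncard : ℝ) ≤ 2 * k →
      (∀ v ∈ S \ X, d ≤ degIn G S v) →
      ∃ S' X' : Set V, X' ⊆ S' ∧ (X'.ncard : ℝ) ≤ 2 * k ∧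
        DensePair ((⊤ : G.Subgraph).induce S').coe
          (Subtype.val ⁻¹' X' : Set ((⊤ : G.Subgraph).induce S').verts) (d : ℝ) k := by
  classical
  intro n
  induction n using Nat.strong_induction_on with
  | _ n ih =>
    intro S hScard X hXS hXneS hXcard hdeg
    by_cases hdense : ∀ A B : Set ((⊤ : G.Subgraph).induce S).verts,
        IsSeparation ((⊤ : G.Subgraph).induce S).coe A B → ((A ∩ B).ncard : ℝ) ≤ k →
        A \ B ⊆ Subtype.val ⁻¹' X ∨ B \ A ⊆ Subtype.val ⁻¹' X
    · refine ⟨S, X, hXS, hXcard, ?_, ?_, hdense⟩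
      · intro h
        obtain ⟨x, hxS, hxX⟩ := Set.exists_of_ssubset (hXS.ssubset_of_ne hXneS)
        exact hxX (Set.eq_univ_iff_forall.1 h ⟨x, hxS⟩)
      · intro v hv
        rw [deg_coe_induce]
        exact_mod_cast hdeg v ⟨v.2, hv⟩
    · push_neg at hdense
      obtain ⟨A, B, hsep, hord, hAX, hBX⟩ := hdense
      set A₀ : Set V := Subtype.val '' A
      set B₀ : Set V := Subtype.val '' B
      have hsplit : ((X ∩ (A₀ \ B₀)).ncard : ℝ) ≤ k ∨ ((X ∩ (B₀ \ A₀)).ncard : ℝ) ≤ k := by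
        by_contra hcon
        push_neg at hcon
        have hdisj : Disjoint (X ∩ (A₀ \ B₀)) (X ∩ (B₀ \ A₀)) := by
          refine Set.disjoint_left.2 ?_
          rintro x ⟨_, hxa, hxb⟩ ⟨_, hxb', _⟩
          exact hxb hxb'
        have hsub : (X ∩ (A₀ \ B₀)) ∪ (X ∩ (B₀ \ A₀)) ⊆ X := by
          rintro x (hx | hx) <;> exact hx.1
        have := Set.ncard_le_ncard hsub (Set.toFinite _)
        rw [Set.ncard_union_eq hdisj (Set.toFinite _) (Set.toFinite _)] at this
        have : ((X ∩ (A₀ \ B₀)).ncard : ℝ) + ((X ∩ (B₀ \ A₀)).ncard : ℝ) ≤ (X.ncard : ℝ) := by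
          exact_mod_cast this
        linarith [hcon.1, hcon.2]
      have hres : ∃ S₁ X₁ : Set V, S₁ ⊆ S ∧ S₁ ≠ S ∧ S₁.Nonempty ∧ X₁ ⊆ S₁ ∧ X₁ ≠ S₁ ∧
          (X₁.ncard : ℝ) ≤ 2 * k ∧ ∀ v ∈ S₁ \ X₁, d ≤ degIn G S₁ v := by
        rcases hsplit with h | h
        · exact step k G d S X hXS hdeg A B hsep hord hAX h
        · exact step k G d S X hXS hdeg B A (isSeparation_symm hsep)
            (by rwa [Set.inter_comm]) hBX h
      obtain ⟨S₁, X₁, hsub, hne, hS₁ne, hX₁S₁, hX₁ne, hX₁card, hdeg₁⟩ := hres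
      have hlt : S₁.ncard < n := by
        rw [← hScard]
        exact Set.ncard_lt_ncard (hsub.ssubset_of_ne hne) (Set.toFinite _)
      exact ih S₁.ncard hlt S₁ rfl X₁ hX₁S₁ hX₁ne hX₁card hdeg₁

theorem dense_sub (k : ℝ) (hk : 0 < k) (V : Type) [Fintype V] [Nonempty V]
    (G : SimpleGraph V) :
    ∃ (G' : G.Subgraph) (X : Set G'.verts),
      (X.ncard : ℝ) ≤ 2 * k ∧ DensePair G'.coe X (minDeg G : ℝ) k := by
  classical
  obtain ⟨S', X', hX'S', hcard, hdp⟩ := key k G (minDeg G) (Set.univ : Set V).ncard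
    Set.univ rfl ∅ (Set.empty_subset _) (Ne.symm (Set.empty_ne_univ).symm)
    (by simp; positivity)
    (by
      intro v _
      have : degIn G Set.univ v = deg G v := by
        rw [degIn, Set.univ_inter]; rfl
      rw [this]
      exact Nat.sInf_le ⟨v, rfl⟩)
  refine ⟨(⊤ : G.Subgraph).induce S', Subtype.val ⁻¹' X', ?_, hdp⟩
  have himg : Subtype.val '' (Subtype.val ⁻¹' X' :
      Set ((⊤ : G.Subgraph).induce S').verts) = X' := by
    rw [Set.image_preimage_eq_inter_range, Subtype.range_val]
    exact Set.inter_eq_self_of_subset_left hX'S'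
  rw [← Set.ncard_image_of_injective _ Subtype.val_injective, himg]
  exact hcard
end

section
/- For every ε > 0 there exists δ > 0 (depending only on ε) satisfying the following. If (G,X) is an ε·|V(G)|-dense pair, then there exists a set Z ⊆ V(G) with |Z| ≤ ε·|V(G)| such that for all distinct vertices p₁, q₁, …, p_t, q_t ∈ V(G) ∖ (X ∪ Z) with t ≤ δ·|V(G)|, there exists a collection of pairwise internally vertex-disjoint paths P₁, …, P_t in G such that, for every 1 ≤ i ≤ t, the path P_i has ends p_i and q_i and all its internal vertices lie in Z. -/
open SimpleGraph

set_option linter.unusedSectionVars false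
namespace LinkageAux
open scoped Classical

variable {V : Type} [Fintype V] [DecidableEq V] {G : SimpleGraph V} {X : Set V} {ε : ℝ}

/-- internal vertices of a walk, as a finset -/
def itl {a b : V} (w : G.Walk a b) : Finset V := w.support.toFinset \ {a, b}

lemma mem_itl {a b x : V} {w : G.Walk a b} :
    x ∈ itl w ↔ x ∈ w.support ∧ x ≠ a ∧ x ≠ b := by
  simp [itl, and_assoc]

lemma itl_card_le {a b : V} (w : G.Walk a b) : (itl w).card ≤ w.length := by
  have h1 : itl w ⊆ w.support.toFinset.erase a := by
    intro x hx
    rw [mem_itl] at hx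
    simp [Finset.mem_erase, hx.2.1, hx.1]
  calc (itl w).card ≤ (w.support.toFinset.erase a).card := Finset.card_le_card h1
    _ ≤ w.support.toFinset.card - 1 := by
        rw [Finset.card_erase_of_mem]; simp [w.start_mem_support]
    _ ≤ w.support.length - 1 := by
        have := w.support.toFinset_card_le
        omega
    _ ≤ w.length := by rw [SimpleGraph.Walk.length_support]; omega

/-- ball of radius r around u via walks avoiding W -/
def ball (G : SimpleGraph V) (W : Finset V) (u : V) (r : ℕ) : Set V :=
  {v | ∃ w : G.Walk u v, w.length ≤ r ∧ ∀ x ∈ w.support, x ∉ W}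

lemma ball_mono {W : Finset V} {u : V} {r : ℕ} : ball G W u r ⊆ ball G W u (r+1) := by
  rintro v ⟨w, hl, hs⟩; exact ⟨w, by omega, hs⟩

lemma mem_ball_self {W : Finset V} {u : V} (hu : u ∉ W) (r : ℕ) : u ∈ ball G W u r :=
  ⟨.nil, by simp, by simp [hu]⟩

lemma ball_disj_W {W : Finset V} {u : V} {r : ℕ} {v : V} (hv : v ∈ ball G W u r) : v ∉ W := by
  obtain ⟨w, _, hs⟩ := hv
  exact hs v w.end_mem_support

lemma ball_grow (hε : 0 < ε)
    (KD : KDense G X (ε * (Fintype.card V : ℝ)))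
    {u h : V} (hu : u ∉ X) (hh : h ∉ X)
    {W : Finset V} (hWu : u ∉ W) (hWh : h ∉ W) (r : ℕ)
    (hnotin : h ∉ ball G W u (r+1)) :
    ε * (Fintype.card V : ℝ) - W.card + (ball G W u r).ncard ≤ (ball G W u (r+1)).ncard := by
  set S := ball G W u r with hS
  set S' := ball G W u (r+1) with hS'
  have hmono : S ⊆ S' := ball_mono
  have hfin : ∀ T : Set V, T.Finite := fun T => T.toFinite
  -- the separation
  have hsep : IsSeparation G (S' ∪ W) Sᶜ := by
    refine ⟨?_, ?_, ?_, ?_⟩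
    · apply Set.eq_univ_of_forall
      intro v
      by_cases hv : v ∈ S
      · exact Or.inl (Or.inl (hmono hv))
      · exact Or.inr hv
    · intro hsub
      exact (hsub (Or.inl (hmono (mem_ball_self hWu r)))) (mem_ball_self hWu r)
    · intro hsub
      have hhS : h ∉ S := fun hx => hnotin (hmono hx)
      rcases hsub hhS with h1 | h2
      · exact hnotin h1
      · exact hWh h2
    · rintro x hx y hy hadj
      have hxS : x ∈ S := by
        rcases hx.1 with h1 | h2
        · exact not_not.mp hx.2
        · exact not_not.mp hx.2
      have hyW : y ∉ W := fun hw => hy.2 (Or.inr hw)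
      have hyS' : y ∉ S' := fun hw => hy.2 (Or.inl hw)
      obtain ⟨w, hl, hs⟩ := hxS
      refine hyS' ⟨w.concat hadj, ?_, ?_⟩
      · rw [SimpleGraph.Walk.length_concat]; omega
      · intro z hz
        rw [SimpleGraph.Walk.support_concat] at hz; rw [List.mem_append] at hz
        rcases hz with hz | hz
        · exact hs z hz
        · simp at hz; subst hz; exact hyW
  -- order bound
  have horder : ((S' ∪ ↑W : Set V) ∩ Sᶜ).ncard ≤ (S' \ S).ncard + W.card := by
    have hsub : ((S' ∪ ↑W : Set V) ∩ Sᶜ) ⊆ (S' \ S) ∪ ↑W := by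
      rintro x ⟨hx1, hx2⟩
      rcases hx1 with h1 | h2
      · exact Or.inl ⟨h1, hx2⟩
      · exact Or.inr h2
    calc ((S' ∪ ↑W : Set V) ∩ Sᶜ).ncard ≤ ((S' \ S) ∪ ↑W : Set V).ncard :=
          Set.ncard_le_ncard hsub (hfin _)
      _ ≤ (S' \ S).ncard + (↑W : Set V).ncard := Set.ncard_union_le _ _
      _ = (S' \ S).ncard + W.card := by rw [Set.ncard_coe_finset]
  -- if order small, contradiction via KDense
  have hbig : ε * (Fintype.card V : ℝ) < (((S' ∪ ↑W : Set V) ∩ Sᶜ).ncard : ℝ) := by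
    by_contra hle
    push_neg at hle
    rcases KD.2 _ _ hsep hle with hc | hc
    · have huu : u ∈ (S' ∪ ↑W : Set V) \ Sᶜ := by
        constructor
        · exact Or.inl (hmono (mem_ball_self hWu r))
        · simp only [Set.mem_compl_iff, not_not]
          exact mem_ball_self hWu r
      exact hu (hc huu)
    · have hhh : h ∈ (Sᶜ : Set V) \ (S' ∪ ↑W) := by
        constructor
        · exact fun hx => hnotin (hmono hx)
        · rintro (h1 | h2)
          · exact hnotin h1
          · exact hWh h2
      exact hh (hc hhh)
  -- combine
  have hdiff : ((S' \ S).ncard : ℝ) + S.ncard = S'.ncard := by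
    have := Set.ncard_diff_add_ncard_of_subset hmono (hfin _)
    exact_mod_cast congrArg (Nat.cast : ℕ → ℝ) this
  have : ε * (Fintype.card V : ℝ) < ((S' \ S).ncard : ℝ) + W.card := by
    calc ε * (Fintype.card V : ℝ) < (((S' ∪ ↑W : Set V) ∩ Sᶜ).ncard : ℝ) := hbig
      _ ≤ ((S' \ S).ncard : ℝ) + W.card := by exact_mod_cast horder
  linarith


lemma ball_card_lower (hε : 0 < ε)
    (KD : KDense G X (ε * (Fintype.card V : ℝ)))
    {u h : V} (hu : u ∉ X) (hh : h ∉ X)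
    {W : Finset V} (hWu : u ∉ W) (hWh : h ∉ W)
    (hWc : (W.card : ℝ) ≤ ε * (Fintype.card V : ℝ) / 2) (r : ℕ)
    (hnotin : h ∉ ball G W u r) :
    1 + (r : ℝ) * (ε * (Fintype.card V : ℝ) / 2) ≤ (ball G W u r).ncard := by
  induction r with
  | zero =>
    simp only [Nat.cast_zero, zero_mul, add_zero]
    have h1 : u ∈ ball G W u 0 := mem_ball_self hWu 0
    have : 1 ≤ (ball G W u 0).ncard := by
      rw [Nat.one_le_iff_ne_zero, Ne, Set.ncard_eq_zero (Set.toFinite _)]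
      intro he
      rw [he] at h1
      exact h1
    exact_mod_cast this
  | succ r ih =>
    have hr : h ∉ ball G W u r := fun hx => hnotin (ball_mono hx)
    have h1 := ih hr
    have h2 := ball_grow hε KD hu hh hWu hWh r hnotin
    push_cast
    push_cast at h1
    nlinarith

/-- There is a short path between non-X vertices avoiding any small forbidden set. -/
lemma short_path (hε : 0 < ε)
    (KD : KDense G X (ε * (Fintype.card V : ℝ)))
    {u h : V} (hu : u ∉ X) (hh : h ∉ X)
    {W : Finset V} (hWu : u ∉ W) (hWh : h ∉ W)
    (hWc : (W.card : ℝ) ≤ ε * (Fintype.card V : ℝ) / 2) :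
    ∃ w : G.Walk u h, w.IsPath ∧ ((w.length : ℝ) ≤ 2/ε + 1) ∧ ∀ x ∈ w.support, x ∉ W := by
  set n : ℕ := Fintype.card V
  have hn : 0 < n := Fintype.card_pos_iff.mpr ⟨u⟩
  set r : ℕ := ⌊2/ε⌋₊ + 1 with hrdef
  have hmem : h ∈ ball G W u r := by
    by_contra hnot
    have := ball_card_lower hε KD hu hh hWu hWh hWc r hnot
    have hcard : (ball G W u r).ncard ≤ n := by
      have := Set.ncard_le_ncard (Set.subset_univ (ball G W u r)) (Set.toFinite _)
      rwa [Set.ncard_univ, Nat.card_eq_fintype_card] at this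
    have hrb : (2/ε : ℝ) < r := by
      have := Nat.lt_floor_add_one (2/ε)
      push_cast [hrdef]
      push_cast at this
      linarith
    have hεn : (0:ℝ) < ε * n := by positivity
    have : (n:ℝ) < (r:ℝ) * (ε * n / 2) := by
      calc (n:ℝ) = (2/ε) * (ε * n / 2) := by field_simp
        _ < (r:ℝ) * (ε * n / 2) := by
            apply mul_lt_mul_of_pos_right hrb; positivity
    have hcard' : ((ball G W u r).ncard : ℝ) ≤ n := by exact_mod_cast hcard
    linarith
  obtain ⟨w, hl, hs⟩ := hmem
  refine ⟨w.bypass, w.bypass_isPath, ?_, ?_⟩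
  · have h1 : w.bypass.length ≤ w.length := SimpleGraph.Walk.length_bypass_le w
    have hrb : (r : ℝ) ≤ 2/ε + 1 := by
      push_cast [hrdef]
      have := Nat.floor_le (by positivity : (0:ℝ) ≤ 2/ε)
      linarith
    have : (w.bypass.length : ℝ) ≤ (r : ℝ) := by exact_mod_cast le_trans h1 hl
    linarith
  · intro x hx
    exact hs x (SimpleGraph.Walk.support_bypass_subset w hx)

/-- A fan of m internally disjoint short paths between two non-X vertices. -/
lemma fan (hε : 0 < ε)
    (KD : KDense G X (ε * (Fintype.card V : ℝ)))
    {u v : V} (hu : u ∉ X) (hv : v ∉ X) (hne : u ≠ v) {L : ℕ}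
    (hL : 2/ε + 1 ≤ (L:ℝ)) (m : ℕ)
    (hm : (m:ℝ) * L ≤ ε * (Fintype.card V : ℝ) / 2) :
    ∃ P : Fin m → G.Walk u v,
      (∀ j, (P j).IsPath) ∧ (∀ j, (P j).length ≤ L) ∧
      (∀ j k, j ≠ k → Disjoint (itl (P j)) (itl (P k))) := by
  induction m with
  | zero => exact ⟨fun j => j.elim0, fun j => j.elim0, fun j => j.elim0, fun j => j.elim0⟩
  | succ m ih =>
    have hm' : (m:ℝ) * L ≤ ε * (Fintype.card V : ℝ) / 2 := by
      have hL0 : (0:ℝ) ≤ L := by positivity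
      push_cast at hm ⊢
      nlinarith
    obtain ⟨P, hP1, hP2, hP3⟩ := ih hm'
    set W : Finset V := Finset.univ.biUnion (fun j : Fin m => itl (P j)) with hWdef
    have hWu : u ∉ W := by
      simp only [hWdef, Finset.mem_biUnion]
      rintro ⟨j, -, hj⟩
      exact (mem_itl.mp hj).2.1 rfl
    have hWv : v ∉ W := by
      simp only [hWdef, Finset.mem_biUnion]
      rintro ⟨j, -, hj⟩
      exact (mem_itl.mp hj).2.2 rfl
    have hWc : (W.card : ℝ) ≤ ε * (Fintype.card V : ℝ) / 2 := by
      have h1 : W.card ≤ ∑ j : Fin m, (itl (P j)).card := Finset.card_biUnion_le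
      have h2 : ∑ j : Fin m, (itl (P j)).card ≤ ∑ j : Fin m, L := by
        apply Finset.sum_le_sum
        intro j _
        exact le_trans (itl_card_le (P j)) (hP2 j)
      have h3 : (W.card : ℝ) ≤ (m * L : ℕ) := by
        exact_mod_cast le_trans h1 (by simpa using h2)
      push_cast at h3
      linarith
    obtain ⟨w, hw1, hw2, hw3⟩ := short_path hε KD hu hv hWu hWv hWc
    refine ⟨Fin.cons w P, ?_, ?_, ?_⟩
    · intro j
      refine Fin.cases ?_ ?_ j
      · exact hw1
      · intro k; simpa using hP1 k
    · intro j
      refine Fin.cases ?_ ?_ j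
      · simp only [Fin.cons_zero]
        exact_mod_cast (by exact_mod_cast le_trans hw2 hL : (w.length:ℝ) ≤ (L:ℝ))
      · intro k; simpa using hP2 k
    · have hdisj : ∀ k : Fin m, Disjoint (itl w) (itl (P k)) := by
        intro k
        rw [Finset.disjoint_left]
        intro x hx hxk
        have hxW : x ∈ W := by
          simp only [hWdef, Finset.mem_biUnion]
          exact ⟨k, Finset.mem_univ k, hxk⟩
        exact hw3 x (mem_itl.mp hx).1 hxW
      intro j k
      refine Fin.cases ?_ ?_ j
      · refine Fin.cases ?_ ?_ k
        · intro hjk; exact absurd rfl hjk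
        · intro k' _
          simpa using hdisj k'
      · intro j'
        refine Fin.cases ?_ ?_ k
        · intro _
          simpa using (hdisj j').symm
        · intro k' hne'
          have hne2 : j' ≠ k' := by
            intro he; exact hne' (by rw [he])
          simpa using hP3 j' k' hne2

open Finset in
/-- product weight of a subset `R` of ground set `g` -/
noncomputable def wgt (p q : ℝ) (g R : Finset V) : ℝ := (∏ _v ∈ R, p) * ∏ _v ∈ g \ R, q

lemma wgt_nonneg {p q : ℝ} (hp : 0 ≤ p) (hq : 0 ≤ q) (g R : Finset V) : 0 ≤ wgt p q g R := by
  unfold wgt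
  apply mul_nonneg <;> exact Finset.prod_nonneg (fun _ _ => by assumption)

lemma sum_wgt (p q : ℝ) (g : Finset V) :
    ∑ R ∈ g.powerset, wgt p q g R = (p + q) ^ g.card := by
  have := Finset.prod_add (fun _ : V => p) (fun _ : V => q) g
  rw [Finset.prod_const] at this
  rw [this]
  rfl

lemma wgt_self (p q : ℝ) (g : Finset V) : wgt p q g g = p ^ g.card := by
  unfold wgt
  rw [Finset.sdiff_self]
  simp [Finset.prod_const]

/-- sum with a 2^{|R|} tilt -/
lemma sum_wgt_tilt (p q : ℝ) (g : Finset V) :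
    ∑ R ∈ g.powerset, wgt p q g R * 2 ^ R.card = (2 * p + q) ^ g.card := by
  rw [← sum_wgt (2*p) q g]
  apply Finset.sum_congr rfl
  intro R _
  simp only [wgt, Finset.prod_const]
  ring

/-- splitting of the weighted sum over a disjoint union of grounds -/
lemma wgt_split (p q : ℝ) {s t : Finset V} (hst : Disjoint s t) (f g' : Finset V → ℝ) :
    ∑ R ∈ (s ∪ t).powerset, wgt p q (s ∪ t) R * (f (R ∩ s) * g' (R ∩ t))
      = (∑ A ∈ s.powerset, wgt p q s A * f A) * (∑ B ∈ t.powerset, wgt p q t B * g' B) := by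
  rw [Finset.sum_mul_sum]
  rw [← Finset.sum_product']
  apply Finset.sum_bij' (fun R _ => (R ∩ s, R ∩ t)) (fun A _ => A.1 ∪ A.2)
  · intro R hR
    rw [Finset.mem_product]
    exact ⟨Finset.mem_powerset.mpr Finset.inter_subset_right,
           Finset.mem_powerset.mpr Finset.inter_subset_right⟩
  · intro A hA
    rw [Finset.mem_product, Finset.mem_powerset, Finset.mem_powerset] at hA
    rw [Finset.mem_powerset]
    exact Finset.union_subset_union hA.1 hA.2
  · intro R hR
    rw [Finset.mem_powerset] at hR
    ext x
    simp only [Finset.mem_union, Finset.mem_inter]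
    constructor
    · rintro (⟨h1, _⟩ | ⟨h1, _⟩) <;> exact h1
    · intro hx
      rcases Finset.mem_union.mp (hR hx) with h | h
      · exact Or.inl ⟨hx, h⟩
      · exact Or.inr ⟨hx, h⟩
  · intro A hA
    rw [Finset.mem_product, Finset.mem_powerset, Finset.mem_powerset] at hA
    have h1 : A.1 ∩ t = ∅ := Finset.eq_empty_of_forall_notMem (fun x hx => by
      rw [Finset.mem_inter] at hx
      exact (Finset.disjoint_left.mp hst (hA.1 hx.1)) hx.2)
    have h2 : A.2 ∩ s = ∅ := Finset.eq_empty_of_forall_notMem (fun x hx => by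
      rw [Finset.mem_inter] at hx
      exact (Finset.disjoint_left.mp hst hx.2) (hA.2 hx.1))
    have e1 : (A.1 ∪ A.2) ∩ s = A.1 := by
      rw [Finset.union_inter_distrib_right, h2]
      rw [Finset.union_empty, Finset.inter_eq_left]
      exact hA.1
    have e2 : (A.1 ∪ A.2) ∩ t = A.2 := by
      rw [Finset.union_inter_distrib_right, h1]
      rw [Finset.empty_union, Finset.inter_eq_left]
      exact hA.2
    rw [e1, e2]
  · intro R hR
    rw [Finset.mem_powerset] at hR
    have hds : Disjoint (R ∩ s) (R ∩ t) :=
      hst.mono Finset.inter_subset_right Finset.inter_subset_right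
    have hRsplit : R ∩ s ∪ R ∩ t = R := by
      ext x
      simp only [Finset.mem_union, Finset.mem_inter]
      constructor
      · rintro (⟨h1, _⟩ | ⟨h1, _⟩) <;> exact h1
      · intro hx
        rcases Finset.mem_union.mp (hR hx) with h | h
        · exact Or.inl ⟨hx, h⟩
        · exact Or.inr ⟨hx, h⟩
    have hw : wgt p q (s ∪ t) R = wgt p q s (R ∩ s) * wgt p q t (R ∩ t) := by
      unfold wgt
      have hd2 : Disjoint (s \ (R ∩ s)) (t \ (R ∩ t)) :=
        hst.mono (Finset.sdiff_subset) (Finset.sdiff_subset)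
      have hsd : (s ∪ t) \ R = (s \ (R ∩ s)) ∪ (t \ (R ∩ t)) := by
        ext x
        simp only [Finset.mem_sdiff, Finset.mem_union, Finset.mem_inter]
        constructor
        · rintro ⟨h1 | h1, h2⟩
          · exact Or.inl ⟨h1, fun hh => h2 hh.1⟩
          · exact Or.inr ⟨h1, fun hh => h2 hh.1⟩
        · rintro (⟨h1, h2⟩ | ⟨h1, h2⟩)
          · exact ⟨Or.inl h1, fun hR' => h2 ⟨hR', h1⟩⟩
          · exact ⟨Or.inr h1, fun hR' => h2 ⟨hR', h1⟩⟩
      have e3 : (∏ _v ∈ R, p) = (∏ _v ∈ R ∩ s, p) * ∏ _v ∈ R ∩ t, p := by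
        rw [← Finset.prod_union hds, hRsplit]
      rw [hsd, Finset.prod_union hd2, e3]
      ring
    rw [hw]
    ring

lemma expect_indep (p q : ℝ) (hpq : p + q = 1) :
    ∀ (m : ℕ) (g : Finset V) (I : Fin m → Finset V),
    (∀ j, I j ⊆ g) → (∀ j k, j ≠ k → Disjoint (I j) (I k)) →
    ∑ R ∈ g.powerset, wgt p q g R * (∏ j, if I j ⊆ R then (1:ℝ) else 2)
      = ∏ j, (2 - p ^ (I j).card) := by
  intro m
  induction m with
  | zero =>
    intro g I _ _
    simp only [Finset.univ_eq_empty, Finset.prod_empty, mul_one]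
    rw [sum_wgt, hpq, one_pow]
  | succ m ih =>
    intro g I hsub hdisj
    have hI0 : I 0 ⊆ g := hsub 0
    have hg : g = I 0 ∪ g \ I 0 := (Finset.union_sdiff_of_subset hI0).symm
    have hst : Disjoint (I 0) (g \ I 0) := Finset.disjoint_sdiff
    have htail : ∀ j : Fin m, I j.succ ⊆ g \ I 0 := by
      intro j
      rw [Finset.subset_sdiff]
      exact ⟨hsub j.succ, (hdisj 0 j.succ (Fin.succ_ne_zero j).symm).symm⟩
    have step : ∑ R ∈ g.powerset, wgt p q g R * (∏ j, if I j ⊆ R then (1:ℝ) else 2)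
        = ∑ R ∈ (I 0 ∪ g \ I 0).powerset, wgt p q (I 0 ∪ g \ I 0) R *
            ((if I 0 ⊆ R ∩ I 0 then (1:ℝ) else 2) *
             ∏ j : Fin m, if I j.succ ⊆ R ∩ (g \ I 0) then (1:ℝ) else 2) := by
      rw [← hg]
      apply Finset.sum_congr rfl
      intro R hR
      rw [Finset.mem_powerset] at hR
      congr 1
      rw [Fin.prod_univ_succ]
      congr 1
      · congr 1
        simp only [Finset.subset_inter_iff, eq_iff_iff]
        constructor
        · intro h; exact ⟨h, le_refl _⟩
        · intro h; exact h.1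
      · apply Finset.prod_congr rfl
        intro j _
        congr 1
        simp only [Finset.subset_inter_iff, eq_iff_iff]
        constructor
        · intro h; exact ⟨h, htail j⟩
        · intro h; exact h.1
    rw [step, wgt_split p q hst (fun A => if I 0 ⊆ A then (1:ℝ) else 2)
      (fun B => ∏ j : Fin m, if I j.succ ⊆ B then (1:ℝ) else 2)]
    have first : ∑ A ∈ (I 0).powerset, wgt p q (I 0) A * (if I 0 ⊆ A then (1:ℝ) else 2)
        = 2 - p ^ (I 0).card := by
      have e1 : ∀ A ∈ (I 0).powerset,
          wgt p q (I 0) A * (if I 0 ⊆ A then (1:ℝ) else 2)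
            = wgt p q (I 0) A * 2 - (if I 0 = A then wgt p q (I 0) A * 1 else 0) := by
        intro A hA
        rw [Finset.mem_powerset] at hA
        by_cases h : I 0 ⊆ A
        · have : I 0 = A := le_antisymm h hA
          rw [if_pos h, if_pos this]
          ring
        · have : I 0 ≠ A := fun he => h (le_of_eq he)
          rw [if_neg h, if_neg this]
          ring
      rw [Finset.sum_congr rfl e1, Finset.sum_sub_distrib, Finset.sum_ite_eq]
      have h2 : ∑ A ∈ (I 0).powerset, wgt p q (I 0) A * 2 = 2 := by
        rw [← Finset.sum_mul, sum_wgt, hpq, one_pow, one_mul]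
      rw [h2, if_pos (Finset.mem_powerset_self _), wgt_self, mul_one]
    rw [first, ih (g \ I 0) (fun j => I j.succ) htail
      (fun j k hjk => hdisj j.succ k.succ (fun he => hjk (Fin.succ_injective m he)))]
    rw [Fin.prod_univ_succ]

lemma prod_ite_ge_of_bad {m : ℕ} (I : Fin m → Finset V) (R : Finset V) (s : ℕ)
    (hbad : (Finset.univ.filter (fun j => I j ⊆ R)).card < s) :
    (2:ℝ) ^ (m + 1 - s) ≤ ∏ j, if I j ⊆ R then (1:ℝ) else 2 := by
  rw [Finset.prod_ite (fun _ => (1:ℝ)) (fun _ => (2:ℝ))]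
  rw [Finset.prod_const, Finset.prod_const, one_pow, one_mul]
  have hcards : (Finset.univ.filter (fun j => I j ⊆ R)).card
      + (Finset.univ.filter (fun j => ¬ I j ⊆ R)).card = m := by
    rw [Finset.card_filter_add_card_filter_not]
    simp
  have : m + 1 - s ≤ (Finset.univ.filter (fun j => ¬ I j ⊆ R)).card := by omega
  exact pow_le_pow_right₀ (by norm_num) this

/-- tail bound for the number of fully-sampled disjoint sets -/
lemma fan_tail (p q γ : ℝ) (hp : 0 ≤ p) (hq : 0 ≤ q) (hpq : p + q = 1)
    (hγ0 : 0 ≤ γ) (hγ1 : γ ≤ 1) (m : ℕ) (I : Fin m → Finset V)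
    (hdisj : ∀ j k, j ≠ k → Disjoint (I j) (I k))
    (hγ : ∀ j, γ ≤ p ^ (I j).card) (s : ℕ) :
    ∑ R ∈ (Finset.univ : Finset V).powerset, wgt p q Finset.univ R *
      (if (Finset.univ.filter (fun j => I j ⊆ R)).card < s then (1:ℝ) else 0)
      ≤ 2 ^ s * (1 - γ/2) ^ m := by
  have hp1 : p ≤ 1 := by linarith
  have key := expect_indep p q hpq m Finset.univ I (fun j => Finset.subset_univ _) hdisj
  set K : ℝ := 2 ^ (m + 1 - s) with hKdef
  have hK : 0 < K := by positivity
  have pointwise : ∀ R ∈ (Finset.univ : Finset V).powerset,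
      K * (wgt p q Finset.univ R *
        (if (Finset.univ.filter (fun j => I j ⊆ R)).card < s then (1:ℝ) else 0))
        ≤ wgt p q Finset.univ R * ∏ j, if I j ⊆ R then (1:ℝ) else 2 := by
    intro R _
    have hw := wgt_nonneg hp hq (Finset.univ : Finset V) R
    by_cases hbad : (Finset.univ.filter (fun j => I j ⊆ R)).card < s
    · rw [if_pos hbad, mul_one]
      have h1 := prod_ite_ge_of_bad I R s hbad
      nlinarith [mul_le_mul_of_nonneg_left h1 hw]
    · rw [if_neg hbad, mul_zero, mul_zero]
      apply mul_nonneg hw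
      apply Finset.prod_nonneg
      intro j _
      split <;> norm_num
  have hsum := Finset.sum_le_sum pointwise
  rw [← Finset.mul_sum, key] at hsum
  have hprod : ∏ j, (2 - p ^ (I j).card) ≤ (2 - γ) ^ m := by
    have he : (2 - γ) ^ m = ∏ _j : Fin m, (2 - γ) := by
      rw [Finset.prod_const, Finset.card_univ, Fintype.card_fin]
    rw [he]
    apply Finset.prod_le_prod
    · intro j _
      have : p ^ (I j).card ≤ 1 := pow_le_one₀ hp hp1
      linarith
    · intro j _
      have := hγ j
      linarith
  have hhalf : (0:ℝ) ≤ 1 - γ/2 := by linarith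
  have h2γ : (2 - γ) ^ m = 2^m * (1-γ/2)^m := by
    rw [← mul_pow]
    congr 1
    ring
  have h1 : (2:ℝ)^m ≤ K * 2^s := by
    rw [hKdef, ← pow_add]
    apply pow_le_pow_right₀ one_le_two
    omega
  have h2 : (0:ℝ) ≤ (1-γ/2)^m := pow_nonneg hhalf m
  have hKR : 2^m * (1-γ/2)^m ≤ K * (2^s * (1-γ/2)^m) := by
    rw [← mul_assoc]
    exact mul_le_mul_of_nonneg_right h1 h2
  have hfinal : K * (∑ R ∈ (Finset.univ : Finset V).powerset, wgt p q Finset.univ R *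
      (if (Finset.univ.filter (fun j => I j ⊆ R)).card < s then (1:ℝ) else 0))
      ≤ K * (2 ^ s * (1 - γ/2) ^ m) := by
    calc _ ≤ ∏ j, (2 - p ^ (I j).card) := hsum
      _ ≤ (2 - γ) ^ m := hprod
      _ = 2^m * (1-γ/2)^m := h2γ
      _ ≤ K * (2^s * (1-γ/2)^m) := hKR
  exact le_of_mul_le_mul_left hfinal hK


lemma size_tail (p q : ℝ) (hp : 0 ≤ p) (hq : 0 ≤ q) (K : ℕ) :
    ∑ R ∈ (Finset.univ : Finset V).powerset, wgt p q Finset.univ R *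
      (if K < R.card then (1:ℝ) else 0)
      ≤ (2*p + q) ^ (Fintype.card V) / 2 ^ K := by
  have h2K : (0:ℝ) < 2^K := by positivity
  rw [le_div_iff₀ h2K, Finset.sum_mul]
  have hpt : ∀ R ∈ (Finset.univ : Finset V).powerset,
      wgt p q Finset.univ R * (if K < R.card then (1:ℝ) else 0) * 2^K
        ≤ wgt p q Finset.univ R * 2^R.card := by
    intro R _
    have hw := wgt_nonneg hp hq (Finset.univ : Finset V) R
    by_cases h : K < R.card
    · rw [if_pos h, mul_one]
      have : (2:ℝ)^K ≤ 2^R.card := pow_le_pow_right₀ one_le_two (le_of_lt h)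
      nlinarith
    · rw [if_neg h, mul_zero, zero_mul]
      positivity
  calc ∑ R ∈ (Finset.univ : Finset V).powerset,
        wgt p q Finset.univ R * (if K < R.card then (1:ℝ) else 0) * 2^K
      ≤ ∑ R ∈ (Finset.univ : Finset V).powerset, wgt p q Finset.univ R * 2^R.card :=
        Finset.sum_le_sum hpt
    _ = (2*p + q) ^ (Fintype.card V) := by rw [sum_wgt_tilt]; rw [Finset.card_univ]

lemma exists_not_bad {ι : Type} [Fintype ι] (p q : ℝ) (hp : 0 ≤ p) (hq : 0 ≤ q)
    (hpq : p + q = 1) (bad : ι → Finset V → Prop) (β : ι → ℝ)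
    (hb : ∀ f : ι, ∑ R ∈ (Finset.univ : Finset V).powerset,
        wgt p q Finset.univ R * (if bad f R then (1:ℝ) else 0) ≤ β f)
    (htot : ∑ f : ι, β f < 1) :
    ∃ R : Finset V, ∀ f : ι, ¬ bad f R := by
  by_contra hcon
  push_neg at hcon
  have h1 : ∀ R ∈ (Finset.univ : Finset V).powerset,
      wgt p q Finset.univ R ≤ ∑ f : ι, wgt p q Finset.univ R * (if bad f R then (1:ℝ) else 0) := by
    intro R _
    obtain ⟨f₀, hf₀⟩ := hcon R
    have hterm : wgt p q Finset.univ R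
        = wgt p q Finset.univ R * (if bad f₀ R then (1:ℝ) else 0) := by
      rw [if_pos hf₀, mul_one]
    calc wgt p q Finset.univ R
        = wgt p q Finset.univ R * (if bad f₀ R then (1:ℝ) else 0) := hterm
      _ ≤ ∑ f : ι, wgt p q Finset.univ R * (if bad f R then (1:ℝ) else 0) := by
          apply Finset.single_le_sum
            (f := fun f => wgt p q Finset.univ R * (if bad f R then (1:ℝ) else 0))
          · intro f _
            apply mul_nonneg (wgt_nonneg hp hq _ _)
            split <;> norm_num
          · exact Finset.mem_univ f₀
  have h2 : (1:ℝ) ≤ ∑ f : ι, β f := by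
    calc (1:ℝ) = (p + q) ^ (Finset.univ : Finset V).card := by rw [hpq, one_pow]
      _ = ∑ R ∈ (Finset.univ : Finset V).powerset, wgt p q Finset.univ R := (sum_wgt p q _).symm
      _ ≤ ∑ R ∈ (Finset.univ : Finset V).powerset,
            ∑ f : ι, wgt p q Finset.univ R * (if bad f R then (1:ℝ) else 0) :=
          Finset.sum_le_sum h1
      _ = ∑ f : ι, ∑ R ∈ (Finset.univ : Finset V).powerset,
            wgt p q Finset.univ R * (if bad f R then (1:ℝ) else 0) := Finset.sum_comm
      _ ≤ ∑ f : ι, β f := Finset.sum_le_sum (fun f _ => hb f)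
  linarith

lemma eventually_small (C₁ C₂ r₁ r₂ : ℝ) (h₁ : 0 ≤ r₁) (h₂ : 0 ≤ r₂)
    (hr₁ : r₁ < 1) (hr₂ : r₂ < 1) :
    ∃ N₀ : ℕ, ∀ n : ℕ, N₀ ≤ n → C₁ * n^2 * r₁^n + C₂ * r₂^n < 1 := by
  have ht1 : Filter.Tendsto (fun n : ℕ => (n:ℝ)^2 * r₁^n) Filter.atTop (nhds 0) := by
    have hs : Summable (fun n : ℕ => ‖(n:ℝ)^2 * r₁^n‖) :=
      summable_norm_pow_mul_geometric_of_norm_lt_one 2 (by rwa [Real.norm_eq_abs, abs_of_nonneg h₁])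
    exact (Summable.of_norm hs).tendsto_atTop_zero
  have ht2 : Filter.Tendsto (fun n : ℕ => r₂^n) Filter.atTop (nhds 0) :=
    tendsto_pow_atTop_nhds_zero_of_lt_one h₂ hr₂
  have ht : Filter.Tendsto (fun n : ℕ => C₁ * n^2 * r₁^n + C₂ * r₂^n) Filter.atTop (nhds 0) := by
    have := ((ht1.const_mul C₁).add (ht2.const_mul C₂))
    simpa [mul_assoc] using this
  have := ht.eventually_lt_const (by norm_num : (0:ℝ) < 1)
  rw [Filter.eventually_atTop] at this
  obtain ⟨N₀, hN₀⟩ := this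
  exact ⟨N₀, fun n hn => hN₀ n hn⟩


/-- pigeonhole selection of a surviving fan path avoiding W -/
lemma pick {u v : V} {m : ℕ} (F : Fin m → G.Walk u v) (R : Finset V) (s : ℕ)
    (hdisj : ∀ j k, j ≠ k → Disjoint (itl (F j)) (itl (F k)))
    (hsurv : s ≤ (Finset.univ.filter (fun j => itl (F j) ⊆ R)).card)
    (W : Finset V) (hW : W.card < s) :
    ∃ j, itl (F j) ⊆ R ∧ Disjoint (itl (F j)) W := by
  set A := Finset.univ.filter (fun j => itl (F j) ⊆ R) with hA
  set B := Finset.univ.filter (fun j : Fin m => ¬ Disjoint (itl (F j)) W) with hB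
  have hBcard : B.card ≤ W.card := by
    have hwit : ∀ j ∈ B, ∃ x, x ∈ itl (F j) ∧ x ∈ W := by
      intro j hj
      rw [hB, Finset.mem_filter] at hj
      obtain ⟨x, hx1, hx2⟩ := Finset.not_disjoint_iff.mp hj.2
      exact ⟨x, hx1, hx2⟩
    choose f hf1 hf2 using hwit
    -- injectivity nightmare: f depends on membership proof; use card_le_card_of_injOn with
    -- a function defined via dite
    have : B.card ≤ W.card := by
      apply Finset.card_le_card_of_injOn
        (fun j => if h : j ∈ B then f j h else u) ?_ ?_
      · intro j hj
        have hj' : j ∈ B := by simpa using hj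
        simp only [dif_pos hj']
        exact hf2 j hj'
      · intro j hj k hk he
        simp only [Finset.mem_coe] at hj hk
        simp only [dif_pos hj, dif_pos hk] at he
        by_contra hne
        have hd := hdisj j k hne
        have := Finset.disjoint_left.mp hd (hf1 j hj)
        rw [he] at this
        exact this (hf1 k hk)
    exact this
  have hAB : 0 < (A \ B).card := by
    have h1 : A.card ≤ (A \ B).card + B.card := by
      have := Finset.card_le_card_sdiff_add_card (s := A) (t := B)
      omega
    omega
  obtain ⟨j, hj⟩ := Finset.card_pos.mp hAB
  rw [Finset.mem_sdiff, hA, hB, Finset.mem_filter, Finset.mem_filter] at hj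
  refine ⟨j, hj.1.2, ?_⟩
  have := hj.2
  push_neg at this
  by_contra hnd
  exact hnd (this (Finset.mem_univ j))

/-- greedy routing -/
lemma route {X : Set V} (R : Finset V) (L s : ℕ) (hs : 0 < s)
    (hpick : ∀ u v : V, u ∉ X → v ∉ X → u ≠ v → ∀ W : Finset V, W.card < s →
      ∃ w : G.Walk u v, w.IsPath ∧ itl w ⊆ R ∧ Disjoint (itl w) W ∧ (itl w).card ≤ L)
    (t : ℕ) (p q : Fin t → V)
    (hinj : Function.Injective (Sum.elim p q))
    (hp : ∀ i, p i ∉ X ∪ ↑R) (hq : ∀ i, q i ∉ X ∪ ↑R)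
    (hts : t * L < s) :
    ∃ P : (i : Fin t) → G.Walk (p i) (q i),
      (∀ i, (P i).IsPath) ∧
      (∀ i, itl (P i) ⊆ R) ∧
      (∀ i j, i ≠ j → Disjoint (itl (P i)) (itl (P j))) := by
  have hpX : ∀ i, p i ∉ X := fun i hx => hp i (Or.inl hx)
  have hqX : ∀ i, q i ∉ X := fun i hx => hq i (Or.inl hx)
  have hpq : ∀ i, p i ≠ q i := by
    intro i he
    have : (Sum.inl i : Fin t ⊕ Fin t) = Sum.inr i := hinj (by simpa using he)
    simp at this
  have key : ∀ k : ℕ, k ≤ t → ∃ P : (i : Fin t) → G.Walk (p i) (q i),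
      ∀ i : Fin t, i.val < k →
        (P i).IsPath ∧ itl (P i) ⊆ R ∧ (itl (P i)).card ≤ L ∧
        (∀ j : Fin t, j.val < k → i ≠ j → Disjoint (itl (P i)) (itl (P j))) := by
    intro k
    induction k with
    | zero =>
      intro _
      have filler : ∀ i : Fin t, G.Walk (p i) (q i) := by
        intro i
        exact (hpick (p i) (q i) (hpX i) (hqX i) (hpq i) ∅ (by simpa using hs)).choose
      exact ⟨filler, fun i hi => absurd hi (Nat.not_lt_zero _)⟩
    | succ k ih =>
      intro hk1
      have hkt : k < t := hk1
      obtain ⟨P, hP⟩ := ih (le_of_lt hkt)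
      set κ : Fin t := ⟨k, hkt⟩ with hκ
      set W : Finset V :=
        Finset.univ.biUnion (fun j : Fin t => if h : j.val < k then itl (P j) else ∅) with hW
      have hWcard : W.card < s := by
        have h1 : W.card ≤ ∑ j : Fin t, (if h : j.val < k then itl (P j) else ∅).card :=
          Finset.card_biUnion_le
        have h2 : ∀ j : Fin t, (if h : j.val < k then itl (P j) else ∅).card ≤ L := by
          intro j
          by_cases h : j.val < k
          · rw [dif_pos h]; exact (hP j h).2.2.1
          · rw [dif_neg h]; simp
        have h3 : ∑ j : Fin t, (if h : j.val < k then itl (P j) else ∅).card ≤ t * L := by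
          calc ∑ j : Fin t, (if h : j.val < k then itl (P j) else ∅).card
              ≤ ∑ _j : Fin t, L := Finset.sum_le_sum (fun j _ => h2 j)
            _ = t * L := by simp [Finset.sum_const, Finset.card_univ, mul_comm]
        omega
      obtain ⟨w, hw1, hw2, hw3, hw4⟩ :=
        hpick (p κ) (q κ) (hpX κ) (hqX κ) (hpq κ) W hWcard
      have hsubW : ∀ j : Fin t, j.val < k → itl (P j) ⊆ W := by
        intro j hj
        intro x hx
        rw [hW, Finset.mem_biUnion]
        exact ⟨j, Finset.mem_univ j, by rw [dif_pos hj]; exact hx⟩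
      refine ⟨Function.update P κ w, ?_⟩
      intro i hik1
      by_cases hiκ : i = κ
      · subst hiκ
        rw [Function.update_self]
        refine ⟨hw1, hw2, hw4, ?_⟩
        intro j hj hij
        have hjk : j.val < k := by
          rcases Nat.lt_succ_iff_lt_or_eq.mp hj with h | h
          · exact h
          · exact absurd (Fin.ext h.symm : κ = j) hij
        rw [Function.update_of_ne (fun he => hij he.symm)]
        exact Finset.disjoint_of_subset_right (hsubW j hjk) hw3
      · have hik : i.val < k := by
          rcases Nat.lt_succ_iff_lt_or_eq.mp hik1 with h | h
          · exact h
          · exact absurd (Fin.ext h : i = κ) hiκ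
        rw [Function.update_of_ne hiκ]
        obtain ⟨ha, hb, hc, hd⟩ := hP i hik
        refine ⟨ha, hb, hc, ?_⟩
        intro j hj hij
        by_cases hjκ : j = κ
        · subst hjκ
          rw [Function.update_self]
          exact (Finset.disjoint_of_subset_right (hsubW i hik) hw3).symm
        · have hjk : j.val < k := by
            rcases Nat.lt_succ_iff_lt_or_eq.mp hj with h | h
            · exact h
            · exact absurd (Fin.ext h : j = κ) hjκ
          rw [Function.update_of_ne hjκ]
          exact hd j hjk hij
  obtain ⟨P, hP⟩ := key t (le_refl t)
  refine ⟨P, fun i => (hP i i.isLt).1, fun i => (hP i i.isLt).2.1,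
    fun i j hij => (hP i i.isLt).2.2.2 j j.isLt hij⟩

/-- existence of a good hub set R together with surviving fans -/
lemma exists_goodR (hε : 0 < ε) (hε1 : ε < 1)
    (KD : KDense G X (ε * (Fintype.card V : ℝ)))
    (L m s K : ℕ) (hL : 2/ε + 1 ≤ (L:ℝ))
    (hm : (m:ℝ) * L ≤ ε * (Fintype.card V : ℝ) / 2)
    (htot : ((Fintype.card V : ℝ))^2 * (2^s * (1 - (ε/4)^L/2)^m)
        + (1 + ε/4)^(Fintype.card V) / 2^K < 1) :
    ∃ R : Finset V, R.card ≤ K ∧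
      ∀ u v : V, u ∉ X → v ∉ X → u ≠ v →
        ∃ F : Fin m → G.Walk u v,
          (∀ j, (F j).IsPath) ∧ (∀ j, (itl (F j)).card ≤ L) ∧
          (∀ j k, j ≠ k → Disjoint (itl (F j)) (itl (F k))) ∧
          s ≤ (Finset.univ.filter (fun j => itl (F j) ⊆ R)).card := by
  set n := Fintype.card V with hn
  set p : ℝ := ε/4 with hpdef
  set q : ℝ := 1 - ε/4 with hqdef
  have hp : 0 ≤ p := by rw [hpdef]; linarith
  have hq : 0 ≤ q := by rw [hqdef]; linarith
  have hpq : p + q = 1 := by rw [hpdef, hqdef]; ring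
  have hp1 : p ≤ 1 := by rw [hpdef]; linarith
  set γ : ℝ := p ^ L with hγdef
  have hγ0 : 0 ≤ γ := pow_nonneg hp L
  have hγ1 : γ ≤ 1 := pow_le_one₀ hp hp1
  have hfans : ∀ u v : V, u ∉ X → v ∉ X → u ≠ v →
      ∃ F : Fin m → G.Walk u v,
        (∀ j, (F j).IsPath) ∧ (∀ j, (F j).length ≤ L) ∧
        (∀ j k, j ≠ k → Disjoint (itl (F j)) (itl (F k))) := by
    intro u v hu hv huv
    obtain ⟨F, h1, h2, h3⟩ := fan hε KD hu hv huv hL m hm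
    exact ⟨F, h1, h2, h3⟩
  choose Fc hF1 hF2 hF3 using hfans
  set fanterm : ℝ := 2^s * (1 - γ/2)^m with hfanterm
  have hfanterm0 : 0 ≤ fanterm := by
    apply mul_nonneg (by positivity)
    apply pow_nonneg
    linarith
  set bad : Option (V × V) → Finset V → Prop := fun o R =>
    Option.elim o (K < R.card) (fun x => ∃ (hu : x.1 ∉ X) (hv : x.2 ∉ X) (huv : x.1 ≠ x.2),
        (Finset.univ.filter (fun j => itl (Fc x.1 x.2 hu hv huv j) ⊆ R)).card < s)
    with hbad
  set β : Option (V × V) → ℝ := fun o =>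
    Option.elim o ((1 + ε/4)^n / 2^K)
      (fun x => if x.1 ∉ X ∧ x.2 ∉ X ∧ x.1 ≠ x.2 then fanterm else 0)
    with hβ
  have hb : ∀ o : Option (V × V), ∑ R ∈ (Finset.univ : Finset V).powerset,
      wgt p q Finset.univ R * (if bad o R then (1:ℝ) else 0) ≤ β o := by
    intro o
    match o with
    | none =>
      have hsz := size_tail (V := V) p q hp hq K
      have he : 2*p + q = 1 + ε/4 := by rw [hpdef, hqdef]; ring
      rw [he] at hsz
      calc ∑ R ∈ (Finset.univ : Finset V).powerset,
            wgt p q Finset.univ R * (if bad none R then (1:ℝ) else 0)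
          = ∑ R ∈ (Finset.univ : Finset V).powerset,
            wgt p q Finset.univ R * (if K < R.card then (1:ℝ) else 0) := by
            apply Finset.sum_congr rfl
            intro R _
            congr 1
            apply if_congr ?_ rfl rfl
            constructor
            · intro h; exact h
            · intro h; exact h
        _ ≤ (1 + ε/4)^(Fintype.card V) / 2^K := hsz
        _ = β none := rfl
    | some x =>
      obtain ⟨u, v⟩ := x
      by_cases hval : u ∉ X ∧ v ∉ X ∧ u ≠ v
      · obtain ⟨hu, hv, huv⟩ := hval
        have happ := fan_tail p q γ hp hq hpq hγ0 hγ1 m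
          (fun j => itl (Fc u v hu hv huv j)) (hF3 u v hu hv huv)
          (fun j => by
            rw [hγdef]
            apply pow_le_pow_of_le_one hp hp1
            exact le_trans (itl_card_le _) (hF2 u v hu hv huv j)) s
        have hβval : β (some (u, v)) = fanterm := by
          have : (if u ∉ X ∧ v ∉ X ∧ u ≠ v then fanterm else 0) = fanterm :=
            if_pos ⟨hu, hv, huv⟩
          exact this
        rw [hβval]
        calc ∑ R ∈ (Finset.univ : Finset V).powerset,
              wgt p q Finset.univ R * (if bad (some (u, v)) R then (1:ℝ) else 0)
            = ∑ R ∈ (Finset.univ : Finset V).powerset,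
              wgt p q Finset.univ R *
                (if (Finset.univ.filter
                    (fun j => itl (Fc u v hu hv huv j) ⊆ R)).card < s then (1:ℝ) else 0) := by
              apply Finset.sum_congr rfl
              intro R _
              congr 1
              apply if_congr ?_ rfl rfl
              constructor
              · rintro ⟨hu', hv', huv', h⟩; exact h
              · intro h; exact ⟨hu, hv, huv, h⟩
          _ ≤ fanterm := happ
      · have hβval : β (some (u, v)) = 0 := by
          have : (if u ∉ X ∧ v ∉ X ∧ u ≠ v then fanterm else 0) = 0 := if_neg hval
          exact this
        rw [hβval]
        have hzero : ∀ R ∈ (Finset.univ : Finset V).powerset,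
            wgt p q Finset.univ R * (if bad (some (u, v)) R then (1:ℝ) else 0) = 0 := by
          intro R _
          have hnb : ¬ bad (some (u, v)) R := by
            rintro ⟨hu, hv, huv, -⟩
            exact hval ⟨hu, hv, huv⟩
          rw [if_neg hnb, mul_zero]
        rw [Finset.sum_congr rfl hzero, Finset.sum_const_zero]
  have htot' : ∑ o : Option (V × V), β o < 1 := by
    rw [Fintype.sum_option]
    have h1 : ∑ x : V × V, β (some x) ≤ (n:ℝ)^2 * fanterm := by
      have h2 : ∀ x : V × V, β (some x) ≤ fanterm := by
        intro x
        have : β (some x) = if x.1 ∉ X ∧ x.2 ∉ X ∧ x.1 ≠ x.2 then fanterm else 0 := rfl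
        rw [this]
        split
        · exact le_refl _
        · exact hfanterm0
      calc ∑ x : V × V, β (some x) ≤ ∑ _x : V × V, fanterm :=
            Finset.sum_le_sum (fun x _ => h2 x)
        _ = (Fintype.card (V × V) : ℝ) * fanterm := by
            rw [Finset.sum_const, Finset.card_univ, nsmul_eq_mul]
        _ = (n:ℝ)^2 * fanterm := by
            rw [Fintype.card_prod, ← hn]
            push_cast
            ring
    have h0 : β none = (1 + ε/4)^n / 2^K := rfl
    rw [h0]
    calc (1 + ε/4)^n / 2^K + ∑ x : V × V, β (some x)
        ≤ (1 + ε/4)^n / 2^K + (n:ℝ)^2 * fanterm := by linarith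
      _ < 1 := by
          rw [show (1 + ε/4 : ℝ) = 1 + p from by rw [hpdef]]
          linarith [htot]
  obtain ⟨R, hR⟩ := exists_not_bad p q hp hq hpq bad β hb htot'
  refine ⟨R, ?_, ?_⟩
  · have hnone := hR none
    have : ¬ (K < R.card) := hnone
    omega
  · intro u v hu hv huv
    refine ⟨Fc u v hu hv huv, hF1 u v hu hv huv,
      fun j => le_trans (itl_card_le _) (hF2 u v hu hv huv j),
      hF3 u v hu hv huv, ?_⟩
    have hsome := hR (some (u, v))
    have : ¬ ∃ (hu' : u ∉ X) (hv' : v ∉ X) (huv' : u ≠ v),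
        (Finset.univ.filter (fun j => itl (Fc u v hu' hv' huv' j) ⊆ R)).card < s := hsome
    push_neg at this
    exact this hu hv huv

lemma numeric_choice (ε : ℝ) (hε : 0 < ε) (hε1 : ε < 1) :
    ∃ (L N₀ : ℕ) (δ₀ : ℝ), 0 < δ₀ ∧ 2/ε + 1 ≤ (L:ℝ) ∧ (0:ℝ) < L ∧
      ∀ n : ℕ, N₀ ≤ n →
        (n:ℝ)^2 * (2^(⌊δ₀ * n * L⌋₊ + 2) * (1 - (ε/4)^L/2)^(⌊ε * n/(2*L)⌋₊))
          + (1 + ε/4)^n / 2^(⌊ε * n⌋₊) < 1 := by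
  set L : ℕ := ⌊2/ε⌋₊ + 2 with hLdef
  have hLR : (0:ℝ) < L := by
    have : 0 < L := by omega
    exact_mod_cast this
  have hLb : 2/ε + 1 ≤ (L:ℝ) := by
    have h := Nat.lt_floor_add_one (2/ε)
    rw [hLdef]
    push_cast
    linarith
  set γ : ℝ := (ε/4)^L with hγdef
  have hγ0 : 0 < γ := by positivity
  have hγ1 : γ ≤ 1 := pow_le_one₀ (by linarith) (by linarith)
  set δ₀ : ℝ := γ*ε/(100*(L:ℝ)^2) with hδdef
  have hδ0 : 0 < δ₀ := by positivity
  have hlog2_pos : 0 < Real.log 2 := Real.log_pos (by norm_num)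
  have hlog2_le : Real.log 2 ≤ 1 := by
    have := Real.log_le_sub_one_of_pos (by norm_num : (0:ℝ) < 2)
    linarith
  have hlog2_ge : 1/2 ≤ Real.log 2 := by
    have h := Real.log_le_sub_one_of_pos (show (0:ℝ) < 2⁻¹ by norm_num)
    rw [Real.log_inv] at h
    norm_num at h
    linarith
  set a : ℝ := δ₀*L*Real.log 2 - γ*ε/(4*L) with hadef
  set b : ℝ := 2*Real.log 2 + γ/2 with hbdef
  set c : ℝ := ε/4 - ε*Real.log 2 with hcdef
  have ha : a < 0 := by
    rw [hadef, hδdef]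
    have key : γ*ε/(100*(L:ℝ)^2)*L*Real.log 2 - γ*ε/(4*L)
        = (γ*ε/L) * (Real.log 2/100 - 1/4) := by
      field_simp
    rw [key]
    apply mul_neg_of_pos_of_neg
    · positivity
    · linarith
  have hc : c < 0 := by
    rw [hcdef]
    nlinarith
  have hr₁ : Real.exp a < 1 := by
    rw [show (1:ℝ) = Real.exp 0 from (Real.exp_zero).symm]
    exact Real.exp_lt_exp.mpr ha
  have hr₂ : Real.exp c < 1 := by
    rw [show (1:ℝ) = Real.exp 0 from (Real.exp_zero).symm]
    exact Real.exp_lt_exp.mpr hc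
  obtain ⟨N₀, hN₀⟩ := eventually_small (Real.exp b) 2 (Real.exp a) (Real.exp c)
    (Real.exp_nonneg a) (Real.exp_nonneg c) hr₁ hr₂
  refine ⟨L, N₀, δ₀, hδ0, hLb, hLR, ?_⟩
  intro n hn
  set sn : ℕ := ⌊δ₀ * n * L⌋₊ + 2 with hsn
  set mn : ℕ := ⌊ε * n/(2*L)⌋₊ with hmn
  set Kn : ℕ := ⌊ε * n⌋₊ with hKn
  have hγhalf : (0:ℝ) ≤ 1 - γ/2 := by linarith
  -- bound the fan term
  have e2 : (2:ℝ)^sn = Real.exp ((sn:ℝ) * Real.log 2) := by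
    rw [Real.exp_nat_mul, Real.exp_log (by norm_num : (0:ℝ) < 2)]
  have e3 : (1-γ/2)^mn ≤ Real.exp (-(γ/2) * (mn:ℝ)) := by
    rw [mul_comm, Real.exp_nat_mul]
    apply pow_le_pow_left₀ hγhalf
    have := Real.add_one_le_exp (-(γ/2))
    linarith
  have hsb : (sn:ℝ) ≤ δ₀ * n * L + 2 := by
    have hfl := Nat.floor_le (show (0:ℝ) ≤ δ₀ * n * L by positivity)
    rw [hsn]
    push_cast
    push_cast at hfl
    linarith
  have hmb : ε * n/(2*L) - 1 ≤ (mn:ℝ) := by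
    have := Nat.lt_floor_add_one (ε * n/(2*L))
    rw [hmn]
    linarith
  have hexp1 : (sn:ℝ) * Real.log 2 + (-(γ/2) * (mn:ℝ)) ≤ a * n + b := by
    have h1 : (sn:ℝ) * Real.log 2 ≤ (δ₀ * n * L + 2) * Real.log 2 :=
      mul_le_mul_of_nonneg_right hsb (le_of_lt hlog2_pos)
    have h2 : -(γ/2) * (mn:ℝ) ≤ -(γ/2) * (ε * n/(2*L) - 1) := by
      apply mul_le_mul_of_nonpos_left hmb
      linarith
    have h3 : (δ₀ * n * L + 2) * Real.log 2 + (-(γ/2) * (ε * n/(2*L) - 1)) = a * n + b := by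
      rw [hadef, hbdef]
      field_simp
      ring
    linarith
  have hfanb : (2:ℝ)^sn * (1-γ/2)^mn ≤ Real.exp b * (Real.exp a)^n := by
    calc (2:ℝ)^sn * (1-γ/2)^mn
        ≤ Real.exp ((sn:ℝ) * Real.log 2) * Real.exp (-(γ/2) * (mn:ℝ)) := by
          rw [e2]
          apply mul_le_mul_of_nonneg_left e3 (Real.exp_nonneg _)
      _ = Real.exp ((sn:ℝ) * Real.log 2 + (-(γ/2) * (mn:ℝ))) := (Real.exp_add _ _).symm
      _ ≤ Real.exp (a * n + b) := Real.exp_le_exp.mpr hexp1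
      _ = Real.exp b * (Real.exp a)^n := by
          rw [← Real.exp_nat_mul, ← Real.exp_add]
          congr 1
          ring
  -- bound the size term
  have h4 : (1+ε/4)^n ≤ Real.exp (ε/4 * n) := by
    rw [mul_comm, Real.exp_nat_mul]
    apply pow_le_pow_left₀ (by linarith)
    have := Real.add_one_le_exp (ε/4)
    linarith
  have h5 : Real.exp ((ε*n - 1) * Real.log 2) ≤ (2:ℝ)^Kn := by
    have e6 : (2:ℝ)^Kn = Real.exp ((Kn:ℝ) * Real.log 2) := by
      rw [Real.exp_nat_mul, Real.exp_log (by norm_num : (0:ℝ) < 2)]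
    rw [e6]
    apply Real.exp_le_exp.mpr
    apply mul_le_mul_of_nonneg_right ?_ (le_of_lt hlog2_pos)
    have := Nat.lt_floor_add_one (ε * (n:ℝ))
    rw [hKn]
    linarith
  have hsizeb : (1 + ε/4)^n / 2^Kn ≤ 2 * (Real.exp c)^n := by
    have h2K : (0:ℝ) < 2^Kn := by positivity
    calc (1 + ε/4)^n / 2^Kn
        ≤ Real.exp (ε/4 * n) / Real.exp ((ε*n - 1) * Real.log 2) := by
          apply div_le_div₀ (Real.exp_nonneg _) h4 (Real.exp_pos _) h5
      _ = Real.exp (ε/4 * n - (ε*n - 1) * Real.log 2) := (Real.exp_sub _ _).symm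
      _ = Real.exp (Real.log 2) * Real.exp (c * n) := by
          rw [← Real.exp_add]
          congr 1
          rw [hcdef]
          ring
      _ = 2 * (Real.exp c)^n := by
          rw [Real.exp_log (by norm_num : (0:ℝ) < 2), mul_comm c (n:ℝ), Real.exp_nat_mul]
  have hN := hN₀ n hn
  have hnn : (0:ℝ) ≤ (n:ℝ)^2 := by positivity
  calc (n:ℝ)^2 * (2^sn * (1-γ/2)^mn) + (1 + ε/4)^n / 2^Kn
      ≤ (n:ℝ)^2 * (Real.exp b * (Real.exp a)^n) + 2 * (Real.exp c)^n := by
        have := mul_le_mul_of_nonneg_left hfanb hnn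
        linarith
    _ = Real.exp b * (n:ℝ)^2 * (Real.exp a)^n + 2 * (Real.exp c)^n := by ring
    _ < 1 := hN

end LinkageAux

open LinkageAux

theorem linkage (ε : ℝ) (hε : 0 < ε) :
    ∃ δ : ℝ, 0 < δ ∧
      ∀ (V : Type) [Fintype V] (G : SimpleGraph V) (X : Set V),
        KDense G X (ε * (Fintype.card V : ℝ)) →
        ∃ Z : Set V, (Z.ncard : ℝ) ≤ ε * (Fintype.card V : ℝ) ∧
          ∀ (t : ℕ) (p q : Fin t → V),
            Function.Injective (Sum.elim p q) →
            (∀ i, p i ∉ X ∪ Z) → (∀ i, q i ∉ X ∪ Z) →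
            (t : ℝ) ≤ δ * (Fintype.card V : ℝ) →
            ∃ P : (i : Fin t) → G.Walk (p i) (q i),
              (∀ i, (P i).IsPath) ∧
              (∀ i, ∀ v ∈ (P i).support, v ≠ p i → v ≠ q i → v ∈ Z) ∧
              (∀ i j, i ≠ j →
                ∀ v ∈ (P i).support, v ≠ p i → v ≠ q i → v ∉ (P j).support) := by
  classical
  by_cases hε1 : ε < 1
  · -- main case
    obtain ⟨L, N₀, δ₀, hδ0, hLb, hLR, hnum⟩ := numeric_choice ε hε hε1
    refine ⟨min δ₀ (1/(N₀+1)), lt_min hδ0 (by positivity), ?_⟩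
    intro V _inst G X KD
    letI : DecidableEq V := Classical.decEq V
    set n := Fintype.card V with hn
    by_cases hsmall : n < N₀
    · -- small graphs: no pairs possible
      refine ⟨∅, by simp; positivity, ?_⟩
      intro t p q hinj hpn hqn ht
      have ht0 : t = 0 := by
        by_contra h
        have h1 : (1:ℝ) ≤ t := by exact_mod_cast Nat.one_le_iff_ne_zero.mpr h
        have h2 : min δ₀ (1/(N₀+1)) * n ≤ (1/(N₀+1)) * n :=
          mul_le_mul_of_nonneg_right (min_le_right _ _) (Nat.cast_nonneg n)
        have h3 : ((1:ℝ)/(N₀+1)) * n < 1 := by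
          rw [div_mul_eq_mul_div, one_mul, div_lt_one (by positivity)]
          have : (n:ℝ) < (N₀:ℝ) := by exact_mod_cast hsmall
          linarith
        linarith
      subst ht0
      exact ⟨fun i => i.elim0, fun i => i.elim0, fun i => i.elim0, fun i => i.elim0⟩
    · push_neg at hsmall
      set m : ℕ := ⌊ε * n/(2*L)⌋₊ with hm
      set s : ℕ := ⌊δ₀ * n * L⌋₊ + 2 with hs
      set K : ℕ := ⌊ε * n⌋₊ with hK
      have hmL : (m:ℝ) * L ≤ ε * n / 2 := by
        have h1 : (m:ℝ) ≤ ε * n/(2*L) := Nat.floor_le (by positivity)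
        have h2 : (m:ℝ) * L ≤ (ε * n/(2*L)) * L :=
          mul_le_mul_of_nonneg_right h1 (le_of_lt hLR)
        have h3 : (ε * n/(2*L)) * L = ε * n / 2 := by
          have hL0 : (L:ℝ) ≠ 0 := ne_of_gt hLR
          field_simp
        linarith
      have htot := hnum n hsmall
      obtain ⟨R, hRcard, hfans⟩ := exists_goodR hε hε1 KD L m s K hLb hmL htot
      refine ⟨↑R, ?_, ?_⟩
      · rw [Set.ncard_coe_finset]
        have h1 : (R.card : ℝ) ≤ (K : ℝ) := by exact_mod_cast hRcard
        have h2 : (K:ℝ) ≤ ε * n := by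
          rw [hK]
          exact Nat.floor_le (by positivity)
        linarith
      · intro t p q hinj hpn hqn ht
        have hpick : ∀ u v : V, u ∉ X → v ∉ X → u ≠ v → ∀ W : Finset V, W.card < s →
            ∃ w : G.Walk u v, w.IsPath ∧ itl w ⊆ R ∧ Disjoint (itl w) W ∧
              (itl w).card ≤ L := by
          intro u v hu hv huv W hW
          obtain ⟨F, h1, h2, h3, h4⟩ := hfans u v hu hv huv
          obtain ⟨j, hj1, hj2⟩ := pick F R s h3 h4 W hW
          exact ⟨F j, h1 j, hj1, hj2, h2 j⟩
        have hts : t * L < s := by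
          have h1 : (t:ℝ) * L ≤ δ₀ * n * L := by
            apply mul_le_mul_of_nonneg_right ?_ (le_of_lt hLR)
            calc (t:ℝ) ≤ min δ₀ (1/(N₀+1)) * n := ht
              _ ≤ δ₀ * n := mul_le_mul_of_nonneg_right (min_le_left _ _) (Nat.cast_nonneg n)
          have h2 : δ₀ * n * L < (⌊δ₀ * n * L⌋₊:ℝ) + 1 := Nat.lt_floor_add_one _
          have h3 : ((t * L : ℕ):ℝ) < ((s:ℕ):ℝ) := by
            rw [hs]
            push_cast
            push_cast at h1 h2
            linarith
          exact_mod_cast h3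
        have hs0 : 0 < s := by rw [hs]; omega
        obtain ⟨P, hP1, hP2, hP3⟩ := route R L s hs0 hpick t p q hinj hpn hqn hts
        refine ⟨P, hP1, ?_, ?_⟩
        · intro i v hv hv1 hv2
          exact Finset.mem_coe.mpr (hP2 i (mem_itl.mpr ⟨hv, hv1, hv2⟩))
        · intro i j hij v hv hv1 hv2 hvj
          have hvi : v ∈ itl (P i) := mem_itl.mpr ⟨hv, hv1, hv2⟩
          have hvR : v ∈ R := hP2 i hvi
          by_cases h1 : v = p j
          · exact hpn j (h1 ▸ Or.inr (Finset.mem_coe.mpr hvR))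
          by_cases h2 : v = q j
          · exact hqn j (h2 ▸ Or.inr (Finset.mem_coe.mpr hvR))
          have hvj' : v ∈ itl (P j) := mem_itl.mpr ⟨hvj, h1, h2⟩
          exact Finset.disjoint_left.mp (hP3 i j hij) hvi hvj'
  · -- ε ≥ 1 : take Z to be everything
    push_neg at hε1
    refine ⟨1, one_pos, ?_⟩
    intro V _inst G X KD
    refine ⟨Set.univ, ?_, ?_⟩
    · rw [Set.ncard_univ, Nat.card_eq_fintype_card]
      nlinarith [Nat.cast_nonneg (α := ℝ) (Fintype.card V)]
    · intro t p q hinj hpn hqn ht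
      have ht0 : t = 0 := by
        by_contra h
        exact hpn ⟨0, Nat.pos_of_ne_zero h⟩ (Or.inr (Set.mem_univ _))
      subst ht0
      exact ⟨fun i => i.elim0, fun i => i.elim0, fun i => i.elim0, fun i => i.elim0⟩
end

section
/- For every positive integer s, there exists a graph G with minimum degree δ(G) ≥ (22/3)·s − 2 such that the disjoint union of s copies of the complete graph K₇ is not a minor of G. -/
open SimpleGraph

section Aux

private def myG (N : ℕ) : SimpleGraph (Fin N) where
  Adj u v := (u : ℕ) % 4 ≠ (v : ℕ) % 4
  symm := ⟨fun _ _ h => Ne.symm h⟩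
  loopless := ⟨fun _ h => h rfl⟩

private lemma myG_adj {N : ℕ} (u v : Fin N) :
    (myG N).Adj u v ↔ (u : ℕ) % 4 ≠ (v : ℕ) % 4 := Iff.rfl

private lemma part_card (N : ℕ) (r : ℕ) :
    ((Finset.univ : Finset (Fin N)).filter (fun u : Fin N => (u : ℕ) % 4 = r)).card
      ≤ N / 4 + 1 := by
  classical
  have h : ((Finset.univ : Finset (Fin N)).filter (fun u : Fin N => (u : ℕ) % 4 = r)).card
      ≤ (Finset.range (N / 4 + 1)).card := by
    apply Finset.card_le_card_of_injOn (fun u : Fin N => (u : ℕ) / 4)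
    · intro u hu
      simp only [Finset.mem_coe, Finset.mem_range]
      have h1 : (u : ℕ) < N := u.isLt
      omega
    · intro u hu v hv huv
      simp only [Finset.coe_filter, Set.mem_setOf_eq, Finset.mem_univ, true_and] at hu hv
      have h1 := Nat.div_add_mod (u : ℕ) 4
      have h2 := Nat.div_add_mod (v : ℕ) 4
      have h3 : (u : ℕ) / 4 = (v : ℕ) / 4 := huv
      apply Fin.ext
      omega
  simpa using h

private lemma deg_myG (N : ℕ) (v : Fin N) :
    deg (myG N) v
      = N - ((Finset.univ : Finset (Fin N)).filter
          (fun u : Fin N => (u : ℕ) % 4 = (v : ℕ) % 4)).card := by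
  classical
  have h1 : (myG N).neighborSet v = {u : Fin N | ¬ ((u : ℕ) % 4 = (v : ℕ) % 4)} := by
    ext u
    simp only [SimpleGraph.mem_neighborSet, myG_adj, Set.mem_setOf_eq]
    exact ne_comm
  rw [deg, h1, Set.ncard_eq_toFinset_card', Set.toFinset_setOf, Finset.filter_not,
    Finset.card_sdiff_of_subset (Finset.filter_subset _ _), Finset.card_univ, Fintype.card_fin]

private lemma no_model_aux (s : ℕ) (hs : 0 < s)
    (μ : Fin s × Fin 7 → Set (Fin (10 * s - 1)))
    (h : IsModel (SimpleGraph.fromRel (fun p q : Fin s × Fin 7 => p.1 = q.1))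
      (myG (10 * s - 1)) μ) : False := by
  classical
  obtain ⟨hdisj, hconn, hadj⟩ := h
  set F : Fin s × Fin 7 → Finset (Fin (10 * s - 1)) := fun p => (μ p).toFinset with hF
  have hmemF : ∀ p x, x ∈ F p ↔ x ∈ μ p := by
    intro p x; simp [hF]
  have hne : ∀ p, 1 ≤ (F p).card := by
    intro p
    have hcp : Nonempty ↥(μ p) := (hconn p).nonempty
    rw [Finset.one_le_card]
    rcases hcp with ⟨⟨x, hx⟩⟩
    exact ⟨x, (hmemF p x).2 hx⟩
  have hFne : ∀ p, (F p).Nonempty := fun p => Finset.card_pos.mp (hne p)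
  -- chosen representatives
  have hxmem : ∀ p, (F p).min' (hFne p) ∈ F p := fun p => Finset.min'_mem _ _
  -- total count
  have htot : ∑ p : Fin s × Fin 7, (F p).card ≤ 10 * s - 1 := by
    rw [← Finset.card_biUnion]
    · exact le_trans (Finset.card_le_univ _) (by simp)
    · intro p _ q _ hpq
      have hd := hdisj p q hpq
      rw [Function.onFun, Finset.disjoint_left]
      intro a ha hb
      exact (Set.disjoint_left.mp hd ((hmemF p a).1 ha)) ((hmemF q a).1 hb)
  -- per block
  have hblock : ∀ i : Fin s, 10 ≤ ∑ j : Fin 7, (F (i, j)).card := by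
    intro i
    have hScard : (Finset.univ.filter (fun j : Fin 7 => (F (i, j)).card = 1)).card ≤ 4 := by
      have h4 : (Finset.univ.filter (fun j : Fin 7 => (F (i, j)).card = 1)).card
          ≤ (Finset.range 4).card := by
        apply Finset.card_le_card_of_injOn
          (fun j : Fin 7 => ((F (i, j)).min' (hFne (i, j)) : ℕ) % 4)
        · intro j hj
          simp only [Finset.mem_coe, Finset.mem_range]
          omega
        · intro j hj j' hj' hjj'
          by_contra hne'
          simp only [Finset.coe_filter, Set.mem_setOf_eq, Finset.mem_univ, true_and]
            at hj hj'
          have hadj' : (SimpleGraph.fromRel (fun p q : Fin s × Fin 7 => p.1 = q.1)).Adj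
              (i, j) (i, j') := by
            rw [SimpleGraph.fromRel_adj]
            exact ⟨by simp [Prod.ext_iff, hne'], Or.inl rfl⟩
          obtain ⟨a, ha, b, hb, hab⟩ := hadj (i, j) (i, j') hadj'
          have haj : a = (F (i, j)).min' (hFne (i, j)) :=
            Finset.card_le_one.mp (le_of_eq hj) a ((hmemF _ a).2 ha) _ (hxmem (i, j))
          have hbj : b = (F (i, j')).min' (hFne (i, j')) :=
            Finset.card_le_one.mp (le_of_eq hj') b ((hmemF _ b).2 hb) _ (hxmem (i, j'))
          rw [myG_adj] at hab
          rw [haj, hbj] at hab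
          exact hab hjj'
      simpa using h4
    have hcards : (Finset.univ.filter (fun j : Fin 7 => (F (i, j)).card = 1)).card
        + (Finset.univ.filter (fun j : Fin 7 => ¬ (F (i, j)).card = 1)).card = 7 := by
      rw [Finset.card_filter_add_card_filter_not]
      simp
    have h1 : (Finset.univ.filter (fun j : Fin 7 => (F (i, j)).card = 1)).card
        ≤ ∑ j ∈ Finset.univ.filter (fun j : Fin 7 => (F (i, j)).card = 1), (F (i, j)).card := by
      calc (Finset.univ.filter (fun j : Fin 7 => (F (i, j)).card = 1)).card
          = ∑ _j ∈ Finset.univ.filter (fun j : Fin 7 => (F (i, j)).card = 1), 1 := by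
            rw [Finset.sum_const, smul_eq_mul, mul_one]
        _ ≤ _ := Finset.sum_le_sum (fun j hj => hne (i, j))
    have h2 : (Finset.univ.filter (fun j : Fin 7 => ¬ (F (i, j)).card = 1)).card * 2
        ≤ ∑ j ∈ Finset.univ.filter (fun j : Fin 7 => ¬ (F (i, j)).card = 1), (F (i, j)).card := by
      calc (Finset.univ.filter (fun j : Fin 7 => ¬ (F (i, j)).card = 1)).card * 2
          = ∑ _j ∈ Finset.univ.filter (fun j : Fin 7 => ¬ (F (i, j)).card = 1), 2 := by
            rw [Finset.sum_const, smul_eq_mul]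
        _ ≤ _ := Finset.sum_le_sum (fun j hj => by
            have hj1 : ¬ (F (i, j)).card = 1 := (Finset.mem_filter.mp hj).2
            have := hne (i, j)
            omega)
    have hsplit : (∑ j ∈ Finset.univ.filter (fun j : Fin 7 => (F (i, j)).card = 1),
          (F (i, j)).card)
        + ∑ j ∈ Finset.univ.filter (fun j : Fin 7 => ¬ (F (i, j)).card = 1), (F (i, j)).card
        = ∑ j : Fin 7, (F (i, j)).card :=
      Finset.sum_filter_add_sum_filter_not _ _ _
    omega
  have hge : 10 * s ≤ ∑ p : Fin s × Fin 7, (F p).card := by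
    calc 10 * s = ∑ _i : Fin s, 10 := by simp [mul_comm]
      _ ≤ ∑ i : Fin s, ∑ j : Fin 7, (F (i, j)).card := Finset.sum_le_sum fun i _ => hblock i
      _ = ∑ p : Fin s × Fin 7, (F p).card :=
          (Fintype.sum_prod_type (f := fun p : Fin s × Fin 7 => (F p).card)).symm
  omega

end Aux

theorem no_sK7_minor_large_min_degree (s : ℕ) (hs : 0 < s) :
    ∃ (N : ℕ) (G : SimpleGraph (Fin N)), 0 < N ∧
      (∀ v : Fin N, 22 / 3 * (s : ℝ) - 2 ≤ (deg G v : ℝ)) ∧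
      ¬ IsMinor (SimpleGraph.fromRel (fun p q : Fin s × Fin 7 => p.1 = q.1)) G := by
  classical
  refine ⟨10 * s - 1, myG (10 * s - 1), by omega, ?_, ?_⟩
  · intro v
    have hd := deg_myG (10 * s - 1) v
    have hc := part_card (10 * s - 1) ((v : ℕ) % 4)
    have hnat : 22 * s ≤ 3 * deg (myG (10 * s - 1)) v + 6 := by omega
    have hcast : (22 * s : ℝ) ≤ 3 * (deg (myG (10 * s - 1)) v : ℝ) + 6 := by
      exact_mod_cast hnat
    linarith
  · rintro ⟨μ, hμ⟩
    exact no_model_aux s hs μ hμ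
end

section
/- For all positive integers s, t and every ε > 0, there exists a graph G with density d(G) ≥ st − 1 + (t−1)/2 − ε such that the disjoint union of s copies of the complete bipartite graph K_{t,t} is not a minor of G. -/
open SimpleGraph

private def clG (a t N : ℕ) : SimpleGraph (Fin N) where
  Adj u v := u ≠ v ∧ ((u:ℕ) < a ∨ (v:ℕ) < a ∨ ((u:ℕ) - a) / t = ((v:ℕ) - a) / t)
  symm := by
    refine ⟨fun u v h => ?_⟩
    obtain ⟨h1, h2⟩ := h
    exact ⟨h1.symm, by tauto⟩
  loopless := ⟨fun u h => h.1 rfl⟩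

private lemma clG_adj {a t N : ℕ} {u v : Fin N} :
    (clG a t N).Adj u v ↔ u ≠ v ∧ ((u:ℕ) < a ∨ (v:ℕ) < a ∨ ((u:ℕ) - a) / t = ((v:ℕ) - a) / t) :=
  Iff.rfl

private instance clG_dec (a t N : ℕ) : DecidableRel (clG a t N).Adj := fun u v =>
  decidable_of_iff _ clG_adj.symm

private lemma nat_div_eq_iff {n k c : ℕ} (h : 0 < k) : n / k = c ↔ c * k ≤ n ∧ n < c * k + k := by
  constructor
  · rintro rfl
    refine ⟨Nat.div_mul_le_self n k, ?_⟩
    have := Nat.lt_div_mul_add (a := n) h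
    omega
  · rintro ⟨h1, h2⟩
    exact Nat.div_eq_of_lt_le h1 (by rw [Nat.succ_mul]; omega)

private lemma card_filter_Ico (N lo hi : ℕ) (h : hi ≤ N) :
    (Finset.univ.filter (fun u : Fin N => lo ≤ (u:ℕ) ∧ (u:ℕ) < hi)).card = hi - lo := by
  rw [← Nat.card_Ico lo hi]
  apply Finset.card_bij (fun (u : Fin N) _ => (u : ℕ))
  · intro u hu; simp only [Finset.mem_filter] at hu; simp [Finset.mem_Ico]; omega
  · intro u _ v _ huv; exact Fin.val_injective huv
  · intro k hk
    simp only [Finset.mem_Ico] at hk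
    exact ⟨⟨k, lt_of_lt_of_le hk.2 h⟩, by simp [hk.1, hk.2], rfl⟩

private lemma ncard_setOf_Ico (N lo hi : ℕ) (h : hi ≤ N) :
    ({v : Fin N | lo ≤ (v:ℕ) ∧ (v:ℕ) < hi}).ncard = hi - lo := by
  classical
  rw [show {v : Fin N | lo ≤ (v:ℕ) ∧ (v:ℕ) < hi}
      = ↑(Finset.univ.filter (fun u : Fin N => lo ≤ (u:ℕ) ∧ (u:ℕ) < hi)) by ext v; simp]
  rw [Set.ncard_coe_finset, card_filter_Ico N lo hi h]

private lemma induce_const {N : ℕ} (G : SimpleGraph (Fin N)) (S : Set (Fin N)) (f : Fin N → ℕ)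
    (hconn : (G.induce S).Connected)
    (hf : ∀ u v : Fin N, u ∈ S → v ∈ S → G.Adj u v → f u = f v)
    {u v : Fin N} (hu : u ∈ S) (hv : v ∈ S) : f u = f v := by
  have aux : ∀ (x y : ↥S) (w : (G.induce S).Walk x y), f ↑x = f ↑y := by
    intro x y w
    induction w with
    | nil => rfl
    | @cons x y z h p ih =>
      have hxy : G.Adj ↑x ↑y := h
      exact (hf x y x.2 y.2 hxy).trans ih
  obtain ⟨w⟩ := hconn.preconnected ⟨u, hu⟩ ⟨v, hv⟩
  exact aux _ _ w

private lemma card_filter_lt (N a : ℕ) (h : a ≤ N) :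
    (Finset.univ.filter (fun u : Fin N => (u:ℕ) < a)).card = a := by
  rw [show (Finset.univ.filter (fun u : Fin N => (u:ℕ) < a))
      = (Finset.univ.filter (fun u : Fin N => 0 ≤ (u:ℕ) ∧ (u:ℕ) < a)) by
    apply Finset.filter_congr; intro u _; simp]
  rw [card_filter_Ico N 0 a h]; omega

private lemma deg_low {a t m N : ℕ} (hN : N = a + m * t) (v : Fin N) (hv : (v:ℕ) < a) :
    (clG a t N).degree v = N - 1 := by
  rw [← SimpleGraph.card_neighborFinset_eq_degree]
  have : (clG a t N).neighborFinset v = Finset.univ.erase v := by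
    ext u
    simp only [SimpleGraph.mem_neighborFinset, clG_adj, Finset.mem_erase, Finset.mem_univ,
      and_true]
    constructor
    · rintro ⟨h1, _⟩; exact h1.symm
    · intro h1; exact ⟨h1.symm, Or.inl hv⟩
  rw [this, Finset.card_erase_of_mem (Finset.mem_univ v), Finset.card_univ, Fintype.card_fin]

private lemma deg_high {a t m N : ℕ} (hN : N = a + m * t) (ht : 0 < t)
    (v : Fin N) (hv : a ≤ (v:ℕ)) :
    (clG a t N).degree v = a + t - 1 := by
  classical
  set c : ℕ := ((v:ℕ) - a) / t with hc
  have hvN : (v:ℕ) < N := v.2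
  have hcm : c < m := by
    rw [hc]
    rw [Nat.div_lt_iff_lt_mul ht]
    omega
  have hhi : a + c * t + t ≤ N := by
    have : (c + 1) * t ≤ m * t := Nat.mul_le_mul_right t hcm
    have h2 : (c+1) * t = c * t + t := by ring
    omega
  have hvIco : a + c * t ≤ (v:ℕ) ∧ (v:ℕ) < a + c * t + t := by
    have h1 : ((v:ℕ) - a) / t = c := hc.symm
    rw [nat_div_eq_iff ht] at h1
    omega
  rw [← SimpleGraph.card_neighborFinset_eq_degree]
  have hset : (clG a t N).neighborFinset v =
      (Finset.univ.filter (fun u : Fin N => (u:ℕ) < a)) ∪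
      ((Finset.univ.filter (fun u : Fin N => a + c * t ≤ (u:ℕ) ∧ (u:ℕ) < a + c * t + t)).erase v) := by
    ext u
    simp only [SimpleGraph.mem_neighborFinset, clG_adj, Finset.mem_union, Finset.mem_erase,
      Finset.mem_filter, Finset.mem_univ, true_and]
    constructor
    · rintro ⟨h1, h2⟩
      rcases h2 with h2 | h2 | h2
      · omega
      · exact Or.inl h2
      · by_cases hua : (u:ℕ) < a
        · exact Or.inl hua
        · refine Or.inr ⟨fun he => h1 (he ▸ rfl), ?_⟩
          have h3 := (nat_div_eq_iff ht).mp ((hc.trans h2).symm)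
          omega
    · rintro (h1 | ⟨hne, h1⟩)
      · refine ⟨?_, Or.inr (Or.inl h1)⟩
        intro he; rw [he] at hv; omega
      · refine ⟨fun he => hne (he ▸ rfl), Or.inr (Or.inr ?_)⟩
        have h3 : ((u:ℕ) - a) / t = c := (nat_div_eq_iff ht).mpr ⟨by omega, by omega⟩
        rw [h3, hc]
  rw [hset, Finset.card_union_of_disjoint, card_filter_lt N a (by omega),
    Finset.card_erase_of_mem, card_filter_Ico N _ _ hhi]
  · omega
  · simp only [Finset.mem_filter, Finset.mem_univ, true_and]; exact hvIco
  · rw [Finset.disjoint_left]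
    intro u hu hu'
    simp only [Finset.mem_filter, Finset.mem_univ, true_and, Finset.mem_erase] at hu hu'
    omega

private lemma two_card_edges {a t m N : ℕ} (hN : N = a + m * t) (ht : 0 < t) :
    2 * (clG a t N).edgeFinset.card = a * (N - 1) + (m * t) * (a + t - 1) := by
  classical
  rw [← SimpleGraph.sum_degrees_eq_twice_card_edges]
  rw [← Finset.sum_filter_add_sum_filter_not Finset.univ (fun v : Fin N => (v:ℕ) < a)]
  have h1 : ∀ v ∈ Finset.univ.filter (fun v : Fin N => (v:ℕ) < a),
      (clG a t N).degree v = N - 1 := by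
    intro v hv
    simp only [Finset.mem_filter] at hv
    exact deg_low hN v hv.2
  have h2 : ∀ v ∈ Finset.univ.filter (fun v : Fin N => ¬((v:ℕ) < a)),
      (clG a t N).degree v = a + t - 1 := by
    intro v hv
    simp only [Finset.mem_filter] at hv
    exact deg_high hN ht v (by omega)
  rw [Finset.sum_congr rfl h1, Finset.sum_congr rfl h2, Finset.sum_const, Finset.sum_const]
  have hca : (Finset.univ.filter (fun v : Fin N => (v:ℕ) < a)).card = a :=
    card_filter_lt N a (by omega)
  have hcb : (Finset.univ.filter (fun v : Fin N => ¬((v:ℕ) < a))).card = m * t := by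
    have := Finset.card_filter_add_card_filter_not (s := (Finset.univ : Finset (Fin N)))
      (p := fun v : Fin N => (v:ℕ) < a)
    rw [Finset.card_univ, Fintype.card_fin] at this
    omega
  rw [hca, hcb, smul_eq_mul, smul_eq_mul]

private lemma clG_no_minor {s t a m N : ℕ} (hs : 0 < s) (ht : 0 < t)
    (ha : a = s * t - 1) (hst : 1 ≤ s * t) (hN : N = a + m * t) :
    ¬ IsMinor (SimpleGraph.fromRel
        (fun p q : Fin s × (Fin t ⊕ Fin t) =>
          p.1 = q.1 ∧ p.2.isLeft ∧ q.2.isRight)) (clG a t N) := by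
  classical
  rintro ⟨μ, hdisj, hconn, hadj⟩
  have hne : ∀ p, (μ p).Nonempty := fun p => Set.nonempty_coe_sort.mp (hconn p).nonempty
  have hHadj : ∀ (i : Fin s) (x y : Fin t),
      (SimpleGraph.fromRel (fun p q : Fin s × (Fin t ⊕ Fin t) =>
        p.1 = q.1 ∧ p.2.isLeft ∧ q.2.isRight)).Adj (i, Sum.inl x) (i, Sum.inr y) := by
    intro i x y
    rw [SimpleGraph.fromRel_adj]
    exact ⟨by simp, Or.inl ⟨rfl, by simp, by simp⟩⟩
  have hAdjCl : ∀ u v : Fin N, (clG a t N).Adj u v → ¬((u:ℕ) < a) → ¬((v:ℕ) < a) →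
      ((u:ℕ) - a) / t = ((v:ℕ) - a) / t := by
    intro u v h hu hv
    obtain ⟨-, h⟩ := h
    tauto
  have hSetCl : ∀ p : Fin s × (Fin t ⊕ Fin t), (∀ w ∈ μ p, ¬((w:ℕ) < a)) →
      ∀ u ∈ μ p, ∀ v ∈ μ p, ((u:ℕ) - a) / t = ((v:ℕ) - a) / t := by
    intro p hp u hu v hv
    exact induce_const _ (μ p) (fun w => ((w:ℕ) - a) / t) (hconn p)
      (fun u' v' hu' hv' hadj' => hAdjCl u' v' hadj' (hp u' hu') (hp v' hv')) hu hv
  have key : ∀ i : Fin s, t ≤ ({v : Fin N | (v:ℕ) < a} ∩ ⋃ z, μ (i, z)).ncard := by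
    intro i
    by_contra hlt
    push_neg at hlt
    set K : Set (Fin t ⊕ Fin t) := {z | (μ (i, z) ∩ {v : Fin N | (v:ℕ) < a}).Nonempty} with hK
    have hKcard : K.ncard ≤ ({v : Fin N | (v:ℕ) < a} ∩ ⋃ z, μ (i, z)).ncard := by
      apply Set.ncard_le_ncard_of_injOn
        (fun z => if h : (μ (i, z) ∩ {v : Fin N | (v:ℕ) < a}).Nonempty then h.choose
          else (hne (i, z)).choose)
      · intro z hz
        have hz' : (μ (i, z) ∩ {v : Fin N | (v:ℕ) < a}).Nonempty := hz
        beta_reduce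
        rw [dif_pos hz']
        have hspec := hz'.choose_spec
        exact ⟨hspec.2, Set.mem_iUnion.mpr ⟨z, hspec.1⟩⟩
      · intro z1 h1 z2 h2 heq
        by_contra hne'
        have h1' : (μ (i, z1) ∩ {v : Fin N | (v:ℕ) < a}).Nonempty := h1
        have h2' : (μ (i, z2) ∩ {v : Fin N | (v:ℕ) < a}).Nonempty := h2
        dsimp only at heq
        rw [dif_pos h1', dif_pos h2'] at heq
        have m1 := h1'.choose_spec.1
        have m2 := h2'.choose_spec.1
        rw [heq] at m1
        exact Set.disjoint_left.mp
          (hdisj (i, z1) (i, z2) (fun h => hne' (congrArg Prod.snd h))) m1 m2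
    have hK1 : K.ncard < t := lt_of_le_of_lt hKcard hlt
    have hLne : ∃ x : Fin t, Sum.inl x ∉ K := by
      by_contra hall
      push_neg at hall
      have hsub : Sum.inl '' (Set.univ : Set (Fin t)) ⊆ K := by
        rintro _ ⟨x, -, rfl⟩; exact hall x
      have hle := Set.ncard_le_ncard hsub (Set.toFinite _)
      rw [Set.ncard_image_of_injective _ Sum.inl_injective, Set.ncard_univ,
        Nat.card_eq_fintype_card, Fintype.card_fin] at hle
      omega
    have hRne : ∃ y : Fin t, Sum.inr y ∉ K := by
      by_contra hall
      push_neg at hall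
      have hsub : Sum.inr '' (Set.univ : Set (Fin t)) ⊆ K := by
        rintro _ ⟨y, -, rfl⟩; exact hall y
      have hle := Set.ncard_le_ncard hsub (Set.toFinite _)
      rw [Set.ncard_image_of_injective _ Sum.inr_injective, Set.ncard_univ,
        Nat.card_eq_fintype_card, Fintype.card_fin] at hle
      omega
    obtain ⟨x₀, hx₀⟩ := hLne
    obtain ⟨y₁, hy₁⟩ := hRne
    have hnotK : ∀ z, z ∉ K → ∀ w ∈ μ (i, z), ¬((w:ℕ) < a) := by
      intro z hz w hw hwa
      exact hz ⟨w, hw, hwa⟩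
    set w₀ : Fin N := (hne (i, Sum.inl x₀)).choose with hw₀
    have hw₀m : w₀ ∈ μ (i, Sum.inl x₀) := (hne (i, Sum.inl x₀)).choose_spec
    set c₀ : ℕ := ((w₀:ℕ) - a) / t with hc₀
    set C₀ : Set (Fin N) := {v | ¬((v:ℕ) < a) ∧ ((v:ℕ) - a) / t = c₀} with hC₀
    have hsub0 : μ (i, Sum.inl x₀) ⊆ C₀ := by
      intro v hv
      exact ⟨hnotK _ hx₀ v hv, hSetCl _ (hnotK _ hx₀) v hv w₀ hw₀m⟩
    have hstep : ∀ z, z ∉ K → ∀ b ∈ μ (i, z), ∀ u ∈ C₀, (clG a t N).Adj u b →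
        μ (i, z) ⊆ C₀ := by
      intro z hz b hb u hu hadj' v hv
      refine ⟨hnotK _ hz v hv, ?_⟩
      have h1 : ((b:ℕ) - a) / t = c₀ := by
        rw [← hu.2]
        exact (hAdjCl u b hadj' (fun h => hu.1 h) (hnotK _ hz b hb)).symm
      rw [← h1]
      exact hSetCl _ (hnotK _ hz) v hv b hb
    have hR : ∀ y : Fin t, Sum.inr y ∉ K → μ (i, Sum.inr y) ⊆ C₀ := by
      intro y hy
      obtain ⟨u, hu, b, hb, hub⟩ := hadj _ _ (hHadj i x₀ y)
      exact hstep _ hy b hb u (hsub0 hu) hub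
    have hL : ∀ x : Fin t, Sum.inl x ∉ K → μ (i, Sum.inl x) ⊆ C₀ := by
      intro x hx
      obtain ⟨u, hu, b, hb, hub⟩ := hadj _ _ (hHadj i x y₁)
      exact hstep _ hx u hu b (hR y₁ hy₁ hb) hub.symm
    have hsubAll : ∀ z ∉ K, μ (i, z) ⊆ C₀ := by
      intro z hz
      cases z with
      | inl x => exact hL x hz
      | inr y => exact hR y hz
    have hc₀m : c₀ < m := by
      have h1 := hnotK _ hx₀ w₀ hw₀m
      have h2 : (w₀:ℕ) < N := w₀.2
      show ((w₀:ℕ) - a) / t < m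
      rw [Nat.div_lt_iff_lt_mul ht]
      omega
    have hC₀card : C₀.ncard = t := by
      have hCeq : C₀ = {v : Fin N | a + c₀ * t ≤ (v:ℕ) ∧ (v:ℕ) < a + c₀ * t + t} := by
        ext v
        simp only [hC₀, Set.mem_setOf_eq]
        constructor
        · rintro ⟨h1, h2⟩
          have h3 := (nat_div_eq_iff ht).mp h2
          omega
        · rintro ⟨h1, h2⟩
          have h3 : ((v:ℕ) - a) / t = c₀ := (nat_div_eq_iff ht).mpr ⟨by omega, by omega⟩
          constructor
          · omega
          · exact h3
      rw [hCeq, ncard_setOf_Ico]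
      · omega
      · have : (c₀ + 1) * t ≤ m * t := Nat.mul_le_mul_right t hc₀m
        have h2 : (c₀ + 1) * t = c₀ * t + t := by ring
        omega
    have hKc : Kᶜ.ncard ≤ t := by
      refine le_trans ?_ hC₀card.le
      apply Set.ncard_le_ncard_of_injOn (fun z => (hne (i, z)).choose)
      · intro z hz
        exact hsubAll z hz (hne (i, z)).choose_spec
      · intro z1 h1 z2 h2 heq
        by_contra hne'
        have m1 := (hne (i, z1)).choose_spec
        have m2 := (hne (i, z2)).choose_spec
        dsimp only at heq
        rw [heq] at m1
        exact Set.disjoint_left.mp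
          (hdisj (i, z1) (i, z2) (fun h => hne' (congrArg Prod.snd h))) m1 m2
    have htot : K.ncard + Kᶜ.ncard = 2 * t := by
      rw [Set.ncard_add_ncard_compl, Nat.card_eq_fintype_card, Fintype.card_sum,
        Fintype.card_fin]
      ring
    omega
  -- summation over copies
  set F : Fin s → Finset (Fin N) := fun i =>
    (Set.toFinite ({v : Fin N | (v:ℕ) < a} ∩ ⋃ z, μ (i, z))).toFinset with hF
  have hFcard : ∀ i, t ≤ (F i).card := by
    intro i
    rw [hF]
    rw [← Set.ncard_eq_toFinset_card]
    exact key i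
  have hFdisj : ∀ i ∈ Finset.univ, ∀ j ∈ Finset.univ, i ≠ j → Disjoint (F i) (F j) := by
    intro i _ j _ hij
    rw [Finset.disjoint_left]
    intro v hvi hvj
    simp only [hF, Set.Finite.mem_toFinset, Set.mem_inter_iff, Set.mem_iUnion] at hvi hvj
    obtain ⟨-, z1, hz1⟩ := hvi
    obtain ⟨-, z2, hz2⟩ := hvj
    exact Set.disjoint_left.mp
      (hdisj (i, z1) (j, z2) (fun h => hij (congrArg Prod.fst h))) hz1 hz2
  have hbound : (Finset.univ.biUnion F).card ≤ a := by
    have hsub : Finset.univ.biUnion F ⊆ Finset.univ.filter (fun u : Fin N => (u:ℕ) < a) := by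
      intro v hv
      simp only [Finset.mem_biUnion] at hv
      obtain ⟨i, -, hv⟩ := hv
      simp only [hF, Set.Finite.mem_toFinset, Set.mem_inter_iff, Set.mem_setOf_eq] at hv
      simp only [Finset.mem_filter, Finset.mem_univ, true_and]
      exact hv.1
    calc (Finset.univ.biUnion F).card ≤ _ := Finset.card_le_card hsub
      _ = a := card_filter_lt N a (by omega)
  have hsum : s * t ≤ (Finset.univ.biUnion F).card := by
    rw [Finset.card_biUnion hFdisj]
    calc s * t = ∑ _i : Fin s, t := by
          rw [Finset.sum_const, Finset.card_univ, Fintype.card_fin, smul_eq_mul]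
      _ ≤ ∑ i, (F i).card := Finset.sum_le_sum (fun i _ => hFcard i)
  omega

theorem no_sKtt_minor_large_density (s t : ℕ) (hs : 0 < s) (ht : 0 < t)
    (ε : ℝ) (hε : 0 < ε) :
    ∃ (N : ℕ) (G : SimpleGraph (Fin N)), 0 < N ∧
      (s : ℝ) * (t : ℝ) - 1 + ((t : ℝ) - 1) / 2 - ε ≤ density G ∧
      ¬ IsMinor (SimpleGraph.fromRel
        (fun p q : Fin s × (Fin t ⊕ Fin t) =>
          p.1 = q.1 ∧ p.2.isLeft ∧ q.2.isRight)) G := by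
  classical
  have hst : 1 ≤ s * t := Nat.one_le_iff_ne_zero.mpr (Nat.mul_ne_zero hs.ne' ht.ne')
  set a : ℕ := s * t - 1 with ha
  set m : ℕ := max 1 ⌈(a : ℝ) * ((a : ℝ) + (t : ℝ)) / (2 * ε)⌉₊ with hm
  set N : ℕ := a + m * t with hN
  have hm1 : 1 ≤ m := le_max_left _ _
  have hmt : m ≤ m * t := Nat.le_mul_of_pos_right m ht
  have hN0 : 0 < N := by omega
  refine ⟨N, clG a t N, hN0, ?_, clG_no_minor hs ht ha hst hN⟩
  have hE : 2 * (clG a t N).edgeFinset.card = a * (N - 1) + (m * t) * (a + t - 1) :=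
    two_card_edges hN ht
  have hEncard : (clG a t N).edgeSet.ncard = (clG a t N).edgeFinset.card := by
    rw [← SimpleGraph.coe_edgeFinset, Set.ncard_coe_finset]
  have hNR : (0:ℝ) < (N:ℝ) := by exact_mod_cast hN0
  rw [density, hEncard, Nat.card_eq_fintype_card, Fintype.card_fin, le_div_iff₀ hNR]
  have h2E : (2:ℝ) * ((clG a t N).edgeFinset.card : ℝ)
      = (a:ℝ) * ((N:ℝ) - 1) + (m:ℝ) * (t:ℝ) * ((a:ℝ) + (t:ℝ) - 1) := by
    have hcast := congrArg (fun k : ℕ => (k:ℝ)) hE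
    have h1 : (1:ℕ) ≤ N := hN0
    have h2 : (1:ℕ) ≤ a + t := by omega
    push_cast [Nat.cast_sub h1, Nat.cast_sub h2] at hcast
    linarith [hcast]
  have haR : (a:ℝ) = (s:ℝ) * (t:ℝ) - 1 := by
    rw [ha]; push_cast [Nat.cast_sub hst]; ring
  have hNeq : (N:ℝ) = (a:ℝ) + (m:ℝ) * (t:ℝ) := by rw [hN]; push_cast; ring
  have hmle : (a:ℝ) * ((a:ℝ) + (t:ℝ)) / (2 * ε) ≤ (m:ℝ) :=
    le_trans (Nat.le_ceil _) (Nat.cast_le.mpr (le_max_right _ _))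
  have hmN : (m:ℝ) ≤ (N:ℝ) := by
    have : m ≤ N := by omega
    exact_mod_cast this
  have hεN : (a:ℝ) * ((a:ℝ) + (t:ℝ)) ≤ 2 * ε * (N:ℝ) := by
    have h2ε : (0:ℝ) < 2 * ε := by linarith
    have := (div_le_iff₀ h2ε).mp hmle
    nlinarith
  rw [haR.symm]
  nlinarith [h2E, hεN, hNeq, mul_pos hNR hNR]
end

section
/- For every integer Δ ≥ 3 and every graph H, there exists a bipartite graph H′ with maximum degree Δ(H′) ≤ Δ and |V(H′)| ≤ 4|E(H)|/(Δ−2) + 2|V(H)| such that H is a minor of H′. -/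
open SimpleGraph

namespace BBDH

variable (Δ : ℕ) {α : Type} [Fintype α] [LinearOrder α] (H : SimpleGraph α)

noncomputable def nbrList (v : α) : List α :=
  ((H.neighborSet v).toFinite.toFinset).sort (· ≤ ·)

lemma mem_nbrList {v w : α} : w ∈ nbrList H v ↔ H.Adj v w := by simp [nbrList]

lemma length_nbrList (v : α) : (nbrList H v).length = deg H v := by
  rw [nbrList, Finset.length_sort, deg,
    Set.ncard_eq_toFinset_card _ (H.neighborSet v).toFinite]

noncomputable def idx (v w : α) : ℕ := List.idxOf w (nbrList H v)

lemma idx_lt {v w : α} (h : H.Adj v w) : idx H v w < deg H v := by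
  rw [← length_nbrList]
  exact List.idxOf_lt_length_iff.2 ((mem_nbrList H).2 h)

lemma idx_inj {v w w' : α} (h : H.Adj v w) (h' : H.Adj v w')
    (e : idx H v w = idx H v w') : w = w' :=
  (List.idxOf_inj ((mem_nbrList H).2 h)).1 e

noncomputable def tt (v : α) : ℕ := max 1 ((deg H v + (Δ - 2) - 1) / (Δ - 2))

omit [Fintype α] [LinearOrder α] in
lemma tt_pos (v : α) : 0 < tt Δ H v := by unfold tt; omega

noncomputable def pval (v w : α) : ℕ :=
  if v < w then 2 * (idx H v w / (Δ - 2)) else 2 * (idx H v w / (Δ - 2)) + 1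

lemma pval_lt (hΔ : 3 ≤ Δ) {v w : α} (h : H.Adj v w) :
    pval Δ H v w < 2 * tt Δ H v := by
  have hk : 0 < Δ - 2 := by omega
  have h1 : idx H v w / (Δ - 2) ≤ (deg H v - 1) / (Δ - 2) :=
    Nat.div_le_div_right (by have := idx_lt H h; omega)
  have h2 : (deg H v - 1) / (Δ - 2) + 1 ≤ tt Δ H v := by
    have he : deg H v + (Δ - 2) - 1 = (deg H v - 1) + (Δ - 2) := by
      have := idx_lt H h; omega
    rw [tt, he, Nat.add_div_right _ hk]
    exact le_max_right _ _
  rw [pval]; split <;> omega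

lemma pval_parity {v w : α} (h : H.Adj v w) :
    pval Δ H v w % 2 ≠ pval Δ H w v % 2 := by
  have hne := h.ne
  rw [pval, pval]
  rcases lt_or_gt_of_ne hne with hlt | hgt
  · rw [if_pos hlt, if_neg (not_lt.2 hlt.le)]; omega
  · rw [if_neg (not_lt.2 hgt.le), if_pos hgt]; omega

lemma pval_eq_imp {v w : α} {c : ℕ} (h : pval Δ H v w = c) :
    idx H v w / (Δ - 2) = c / 2 := by
  rw [pval] at h; split at h <;> omega

abbrev W := Σ v : α, Fin (2 * tt Δ H v)

def G' : SimpleGraph (W Δ H) where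
  Adj x y := (x.1 = y.1 ∧ (x.2.val + 1 = y.2.val ∨ y.2.val + 1 = x.2.val)) ∨
             (H.Adj x.1 y.1 ∧ x.2.val = pval Δ H x.1 y.1 ∧ y.2.val = pval Δ H y.1 x.1)
  symm := ⟨by
    rintro x y (⟨h1, h2⟩ | ⟨h1, h2, h3⟩)
    · exact Or.inl ⟨h1.symm, h2.symm⟩
    · exact Or.inr ⟨h1.symm, h3, h2⟩⟩
  loopless := ⟨by
    rintro x (⟨_, h⟩ | ⟨h, _⟩)
    · omega
    · exact H.irrefl h⟩

noncomputable def coloring : (G' Δ H).Coloring (Fin 2) :=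
  SimpleGraph.Coloring.mk (fun x => ⟨x.2.val % 2, Nat.mod_lt _ two_pos⟩) (by
    rintro x y (⟨h1, h2⟩ | ⟨h1, h2, h3⟩) heq
    · rw [Fin.mk.injEq] at heq; omega
    · rw [Fin.mk.injEq, h2, h3] at heq
      exact pval_parity Δ H h1 heq)

lemma deg_G'_le (hΔ : 3 ≤ Δ) (x : W Δ H) : deg (G' Δ H) x ≤ Δ := by
  classical
  have hk : 0 < Δ - 2 := by omega
  set A : Set (W Δ H) :=
    {y | y.1 = x.1 ∧ (y.2.val = x.2.val + 1 ∨ y.2.val + 1 = x.2.val)} with hA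
  set B : Set (W Δ H) :=
    {y | H.Adj x.1 y.1 ∧ y.2.val = pval Δ H y.1 x.1 ∧ x.2.val = pval Δ H x.1 y.1} with hB
  have hsub : (G' Δ H).neighborSet x ⊆ A ∪ B := by
    rintro y (⟨h1, h2⟩ | ⟨h1, h2, h3⟩)
    · exact Or.inl ⟨h1.symm, by omega⟩
    · exact Or.inr ⟨h1, h3, h2⟩
  have hAcard : A.ncard ≤ 2 := by
    have h2 : ({x.2.val + 1, x.2.val - 1} : Set ℕ).ncard ≤ 2 := by
      refine le_trans (Set.ncard_insert_le _ _) ?_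
      simp [Set.ncard_singleton]
    refine le_trans (Set.ncard_le_ncard_of_injOn (fun y => y.2.val) ?_ ?_) h2
    · rintro y ⟨h1, h2⟩
      simp only [Set.mem_insert_iff, Set.mem_singleton_iff]
      omega
    · rintro ⟨a, i⟩ ⟨ha, _⟩ ⟨b, j⟩ ⟨hb, _⟩ hval
      simp only at ha hb hval
      subst ha; subst hb
      exact congrArg _ (Fin.ext hval)
  have hBcard : B.ncard ≤ Δ - 2 := by
    set q := x.2.val / 2 with hq
    have hIco : (Set.Ico ((Δ - 2) * q) ((Δ - 2) * q + (Δ - 2))).ncard = Δ - 2 := by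
      rw [← Finset.coe_Ico, Set.ncard_coe_finset, Nat.card_Ico]; omega
    calc B.ncard ≤ _ := Set.ncard_le_ncard_of_injOn (fun y => idx H x.1 y.1) ?_ ?_
      _ = Δ - 2 := hIco
    · rintro y ⟨h1, h2, h3⟩
      have hdiv : idx H x.1 y.1 / (Δ - 2) = q := pval_eq_imp Δ H h3.symm
      have h4 := Nat.div_add_mod (idx H x.1 y.1) (Δ - 2)
      have h5 := Nat.mod_lt (idx H x.1 y.1) hk
      rw [hdiv] at h4
      simp only [Set.mem_Ico]
      omega
    · rintro y ⟨h1, h2, _⟩ y' ⟨h1', h2', _⟩ hval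
      have he : y.1 = y'.1 := idx_inj H h1 h1' hval
      rcases y with ⟨a, i⟩; rcases y' with ⟨b, j⟩
      simp only at he; subst he
      simp only at h2 h2'
      exact congrArg _ (Fin.ext (h2.trans h2'.symm))
  calc deg (G' Δ H) x ≤ (A ∪ B).ncard := Set.ncard_le_ncard hsub
    _ ≤ A.ncard + B.ncard := Set.ncard_union_le _ _
    _ ≤ 2 + (Δ - 2) := by omega
    _ = Δ := by omega

omit [LinearOrder α] in
lemma card_W_le (hΔ : 3 ≤ Δ) :
    (Fintype.card (Σ v : α, Fin (2 * tt Δ H v)) : ℝ) ≤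
      4 * (H.edgeSet.ncard : ℝ) / ((Δ : ℝ) - 2) + 2 * (Fintype.card α : ℝ) := by
  classical
  have hk : 0 < Δ - 2 := by omega
  have hk2 : (2 : ℕ) ≤ Δ := by omega
  have hkR : (0 : ℝ) < (Δ : ℝ) - 2 := by
    have : (3 : ℝ) ≤ (Δ : ℝ) := by exact_mod_cast hΔ
    linarith
  have hv : ∀ v : α, 2 * tt Δ H v * (Δ - 2) ≤ 2 * deg H v + 2 * (Δ - 2) := by
    intro v
    rcases Nat.eq_zero_or_pos (deg H v) with h0 | h1
    · have ht : tt Δ H v = 1 := by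
        rw [tt, h0, Nat.zero_add, Nat.div_eq_of_lt (by omega)]
        simp
      rw [ht, h0]; omega
    · have he : deg H v + (Δ - 2) - 1 = (deg H v - 1) + (Δ - 2) := by omega
      have ht : tt Δ H v = (deg H v - 1) / (Δ - 2) + 1 := by
        rw [tt, he, Nat.add_div_right _ hk]
        exact max_eq_right (Nat.le_add_left _ _)
      have hdm := Nat.div_mul_le_self (deg H v - 1) (Δ - 2)
      calc 2 * tt Δ H v * (Δ - 2)
          = 2 * ((deg H v - 1) / (Δ - 2) * (Δ - 2)) + 2 * (Δ - 2) := by rw [ht]; ring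
        _ ≤ 2 * (deg H v - 1) + 2 * (Δ - 2) := by
            have := Nat.mul_le_mul_left 2 hdm; omega
        _ ≤ 2 * deg H v + 2 * (Δ - 2) := by omega
  have hdeg : ∀ v : α, deg H v = H.degree v := by
    intro v
    rw [deg, ← Nat.card_coe_set_eq, Nat.card_eq_fintype_card,
      SimpleGraph.card_neighborSet_eq_degree]
  have hE : H.edgeSet.ncard = H.edgeFinset.card := by
    rw [← SimpleGraph.coe_edgeFinset, Set.ncard_coe_finset]
  have hsum : ∑ v : α, deg H v = 2 * H.edgeSet.ncard := by
    rw [hE]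
    rw [Finset.sum_congr rfl (fun v _ => hdeg v)]
    exact SimpleGraph.sum_degrees_eq_twice_card_edges H
  have hN : Fintype.card (Σ v : α, Fin (2 * tt Δ H v)) * (Δ - 2) ≤
      4 * H.edgeSet.ncard + 2 * Fintype.card α * (Δ - 2) := by
    have hcard : Fintype.card (Σ v : α, Fin (2 * tt Δ H v)) = ∑ v : α, 2 * tt Δ H v := by
      simp [Fintype.card_sigma]
    rw [hcard, Finset.sum_mul]
    calc ∑ v : α, 2 * tt Δ H v * (Δ - 2)
        ≤ ∑ v : α, (2 * deg H v + 2 * (Δ - 2)) := Finset.sum_le_sum fun v _ => hv v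
      _ = 2 * (∑ v : α, deg H v) + Fintype.card α * (2 * (Δ - 2)) := by
          rw [Finset.sum_add_distrib, Finset.sum_const, ← Finset.mul_sum]
          simp [Finset.card_univ, smul_eq_mul]
      _ = 4 * H.edgeSet.ncard + 2 * Fintype.card α * (Δ - 2) := by rw [hsum]; ring
  have hr : (Fintype.card (Σ v : α, Fin (2 * tt Δ H v)) : ℝ) * ((Δ : ℝ) - 2) ≤
      4 * (H.edgeSet.ncard : ℝ) + 2 * (Fintype.card α : ℝ) * ((Δ : ℝ) - 2) := by
    rify [hk2] at hN
    convert hN using 2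
  calc (Fintype.card (Σ v : α, Fin (2 * tt Δ H v)) : ℝ)
      = (Fintype.card (Σ v : α, Fin (2 * tt Δ H v)) : ℝ) * ((Δ : ℝ) - 2) / ((Δ : ℝ) - 2) := by
        field_simp
    _ ≤ (4 * (H.edgeSet.ncard : ℝ) + 2 * (Fintype.card α : ℝ) * ((Δ : ℝ) - 2)) / ((Δ : ℝ) - 2) := by
        gcongr
    _ = 4 * (H.edgeSet.ncard : ℝ) / ((Δ : ℝ) - 2) + 2 * (Fintype.card α : ℝ) := by
        field_simp

def induceIso {β γ : Type*} (G : SimpleGraph β) (e : β ≃ γ) (S : Set β) :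
    G.induce S ≃g (G.comap ⇑e.symm).induce (⇑e '' S) where
  toFun := fun a => ⟨e a.1, ⟨a.1, a.2, rfl⟩⟩
  invFun := fun b => ⟨e.symm b.1, by
    obtain ⟨x, hx, hxe⟩ := b.2
    rw [← hxe, Equiv.symm_apply_apply]; exact hx⟩
  left_inv := fun a => Subtype.ext (by simp)
  right_inv := fun b => Subtype.ext (by simp)
  map_rel_iff' := by
    intro a b
    simp [SimpleGraph.comap_adj]

lemma fiber_conn (v : α) :
    ((G' Δ H).induce {y : W Δ H | y.1 = v}).Connected := by
  have hpos : 0 < 2 * tt Δ H v := by have := tt_pos Δ H v; omega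
  rw [SimpleGraph.connected_iff_exists_forall_reachable]
  refine ⟨⟨⟨v, ⟨0, hpos⟩⟩, rfl⟩, ?_⟩
  have key : ∀ j : ℕ, ∀ hj : j < 2 * tt Δ H v,
      ((G' Δ H).induce {y : W Δ H | y.1 = v}).Reachable
        ⟨⟨v, ⟨0, hpos⟩⟩, rfl⟩ ⟨⟨v, ⟨j, hj⟩⟩, rfl⟩ := by
    intro j
    induction j with
    | zero => intro hj; exact SimpleGraph.Reachable.refl _
    | succ n ih =>
      intro hj
      have hn : n < 2 * tt Δ H v := by omega
      have hadj : ((G' Δ H).induce {y : W Δ H | y.1 = v}).Adj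
          ⟨⟨v, ⟨n, hn⟩⟩, rfl⟩ ⟨⟨v, ⟨n + 1, hj⟩⟩, rfl⟩ := Or.inl ⟨rfl, Or.inl rfl⟩
      exact (ih hn).trans hadj.reachable
  rintro ⟨⟨v', i⟩, (hv' : v' = v)⟩
  subst hv'
  exact key i.val i.isLt

end BBDH

theorem bipartite_bounded_degree_host (Δ : ℕ) (hΔ : 3 ≤ Δ)
    (α : Type) [Fintype α] (H : SimpleGraph α) :
    ∃ (m : ℕ) (H' : SimpleGraph (Fin m)),
      H'.Colorable 2 ∧ (∀ v, deg H' v ≤ Δ) ∧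
      (m : ℝ) ≤ 4 * (H.edgeSet.ncard : ℝ) / ((Δ : ℝ) - 2) + 2 * (Fintype.card α : ℝ) ∧
      IsMinor H H' := by
  classical
  letI : LinearOrder α :=
    LinearOrder.lift' ⇑(Fintype.equivFin α) (Fintype.equivFin α).injective
  set G := BBDH.G' Δ H with hG
  set e := Fintype.equivFin (BBDH.W Δ H) with he
  refine ⟨Fintype.card (BBDH.W Δ H), G.comap ⇑e.symm, ?_, ?_, ?_, ?_⟩
  · exact ⟨SimpleGraph.Coloring.mk (fun a => BBDH.coloring Δ H (e.symm a))
      (fun {a b} h => (BBDH.coloring Δ H).valid h)⟩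
  · intro a
    have hset : (G.comap ⇑e.symm).neighborSet a = ⇑e '' (G.neighborSet (e.symm a)) := by
      rw [Equiv.image_eq_preimage_symm]
      ext y
      simp [SimpleGraph.mem_neighborSet, SimpleGraph.comap_adj]
    rw [deg, hset, Set.ncard_image_of_injective _ e.injective]
    exact BBDH.deg_G'_le Δ H hΔ _
  · exact BBDH.card_W_le Δ H hΔ
  · refine ⟨fun v => ⇑e '' {y : BBDH.W Δ H | y.1 = v}, ?_, ?_, ?_⟩
    · intro u v huv
      apply Set.disjoint_image_of_injective e.injective
      rw [Set.disjoint_left]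
      intro y hy1 hy2
      exact huv (hy1.symm.trans hy2)
    · intro v
      exact (BBDH.induceIso G e _).connected_iff.mp (BBDH.fiber_conn Δ H v)
    · intro u v huv
      refine ⟨e ⟨u, ⟨BBDH.pval Δ H u v, BBDH.pval_lt Δ H hΔ huv⟩⟩, ⟨_, rfl, rfl⟩,
        e ⟨v, ⟨BBDH.pval Δ H v u, BBDH.pval_lt Δ H hΔ huv.symm⟩⟩, ⟨_, rfl, rfl⟩, ?_⟩
      show G.Adj (e.symm (e _)) (e.symm (e _))
      simp only [Equiv.symm_apply_apply]
      exact Or.inr ⟨huv, rfl, rfl⟩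
end
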